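/- arXiv:chao-dyn/9904019 — 4 statements merged into one kernel-verified Lean document; each statement's English description precedes it below -/
import Mathlib

section
/- Let b, ε ∈ ℝ satisfy |ε|(1+|b|) < 2√(1 − 2/√5). Then for every symbol sequence s : ℤ → ℝ with s_t ∈ {−1, +1} for all t, there exists exactly one bounded sequence z : ℤ → ℝ such that s_t · z_t > 0 for all t ∈ ℤ and ε(z_{t+1} + b z_{t−1}) + 1 − z_t² = 0 for all t ∈ ℤ. -/
open scoped BoundedContinuousFunction

private lemma henon_sqrt_diff {a b μ : ℝ} (hμ : 0 < μ) (ha : μ^2 ≤ a) (hb : μ^2 ≤ b) :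
    |Real.sqrt a - Real.sqrt b| * (2*μ) ≤ |a - b| := by
  have ha0 : (0:ℝ) ≤ a := le_trans (by positivity) ha
  have hb0 : (0:ℝ) ≤ b := le_trans (by positivity) hb
  have hsa : μ ≤ Real.sqrt a := by
    rw [← Real.sqrt_sq hμ.le]; exact Real.sqrt_le_sqrt ha
  have hsb : μ ≤ Real.sqrt b := by
    rw [← Real.sqrt_sq hμ.le]; exact Real.sqrt_le_sqrt hb
  have key : (Real.sqrt a - Real.sqrt b) * (Real.sqrt a + Real.sqrt b) = a - b := by
    have h1 := Real.sq_sqrt ha0; have h2 := Real.sq_sqrt hb0; nlinarith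
  calc |Real.sqrt a - Real.sqrt b| * (2*μ)
      ≤ |Real.sqrt a - Real.sqrt b| * (Real.sqrt a + Real.sqrt b) :=
        mul_le_mul_of_nonneg_left (by linarith) (abs_nonneg _)
    _ = |(Real.sqrt a - Real.sqrt b) * (Real.sqrt a + Real.sqrt b)| := by
        rw [abs_mul, abs_of_nonneg (by linarith : (0:ℝ) ≤ Real.sqrt a + Real.sqrt b)]
    _ = |a - b| := by rw [key]

private lemma henon_key {c : ℝ} (hc0 : 0 ≤ c)
    (hc : c < 2 * Real.sqrt (1 - 2 / Real.sqrt 5)) :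
    3*c^2 + 2*c*Real.sqrt (c^2+4) < 4 ∧ c < 1 := by
  set s5 := Real.sqrt 5 with hs5def
  have hs5 : s5^2 = 5 := Real.sq_sqrt (by norm_num)
  have hs5pos : 0 < s5 := Real.sqrt_pos.2 (by norm_num)
  have hs5gt : 2 < s5 := by nlinarith
  have hd0 : (0:ℝ) ≤ 1 - 2 / s5 := by
    rw [sub_nonneg, div_le_one hs5pos]; linarith
  have hcsq : c^2 < 4 * (1 - 2 / s5) := by
    nlinarith [Real.sq_sqrt hd0, Real.sqrt_nonneg (1 - 2 / s5), hc]
  have hds5 : (1 - 2 / s5) * s5 = s5 - 2 := by field_simp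
  have h4d : 4 * (1 - 2 / s5) < 1 := by
    have h8 : 3 * s5 < 8 := by nlinarith
    nlinarith [hds5]
  have hc1 : c < 1 := by nlinarith
  set R := Real.sqrt (c^2+4) with hRdef
  have hR : R^2 = c^2 + 4 := Real.sq_sqrt (by positivity)
  have hR0 : 0 ≤ R := Real.sqrt_nonneg _
  have hzero : 5*(4*(1 - 2/s5))^2 - 40*(4*(1 - 2/s5)) + 16 = 0 := by
    field_simp
    nlinarith [hs5]
  have hquad : 5*(c^2)^2 - 40*c^2 + 16 > 0 := by
    nlinarith [hcsq, hzero, mul_pos (sub_pos.2 hcsq)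
      (by nlinarith : (0:ℝ) < 8 - c^2 - 4*(1 - 2/s5))]
  have h43 : 3*c^2 < 4 := by nlinarith
  have hsq : (2*c*R)^2 = 4*c^2*(c^2+4) := by rw [mul_pow, mul_pow, hR]; ring
  have ha0 : 0 ≤ 2*c*R := by positivity
  have hid : (4-3*c^2)^2 - (2*c*R)^2 = 5*(c^2)^2 - 40*c^2 + 16 := by
    rw [hsq]; ring
  have hBa : (2*c*R)^2 < (4-3*c^2)^2 := by linarith
  have := lt_of_pow_lt_pow_left₀ 2 (by linarith : (0:ℝ) ≤ 4-3*c^2) hBa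
  exact ⟨by linarith, hc1⟩

noncomputable def henonAIMap (b ε : ℝ) (S0 : ℤ →ᵇ ℝ) (z : ℤ →ᵇ ℝ) : ℤ →ᵇ ℝ :=
  BoundedContinuousFunction.ofNormedAddCommGroup
    (fun t => S0 t * Real.sqrt (1 + ε * (z (t+1) + b * z (t-1))))
    continuous_of_discreteTopology
    (‖S0‖ * Real.sqrt (1 + |ε| * (1+|b|) * ‖z‖))
    (by
      intro t
      have h1 : |z (t+1)| ≤ ‖z‖ := z.norm_coe_le_norm (t+1)
      have h2 : |z (t-1)| ≤ ‖z‖ := z.norm_coe_le_norm (t-1)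
      have hz0 : (0:ℝ) ≤ ‖z‖ := norm_nonneg z
      have hA : 1 + ε * (z (t+1) + b * z (t-1)) ≤ 1 + |ε| * (1+|b|) * ‖z‖ := by
        have step : ε * (z (t+1) + b * z (t-1)) ≤ |ε| * (1+|b|) * ‖z‖ := by
          calc ε * (z (t+1) + b * z (t-1)) ≤ |ε * (z (t+1) + b * z (t-1))| := le_abs_self _
            _ = |ε| * |z (t+1) + b * z (t-1)| := abs_mul _ _
            _ ≤ |ε| * (|z (t+1)| + |b| * |z (t-1)|) := by
                apply mul_le_mul_of_nonneg_left _ (abs_nonneg ε)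
                calc |z (t+1) + b * z (t-1)| ≤ |z (t+1)| + |b * z (t-1)| := abs_add_le _ _
                  _ = |z (t+1)| + |b| * |z (t-1)| := by rw [abs_mul]
            _ ≤ |ε| * (‖z‖ + |b| * ‖z‖) := by
                apply mul_le_mul_of_nonneg_left _ (abs_nonneg ε)
                have := mul_le_mul_of_nonneg_left h2 (abs_nonneg b)
                linarith
            _ = |ε| * (1+|b|) * ‖z‖ := by ring
        linarith
      rw [norm_mul]
      apply mul_le_mul (S0.norm_coe_le_norm t) _ (norm_nonneg _) (norm_nonneg S0)
      rw [Real.norm_eq_abs, abs_of_nonneg (Real.sqrt_nonneg _)]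
      exact Real.sqrt_le_sqrt hA)

lemma henonAIMap_apply (b ε : ℝ) (S0 z : ℤ →ᵇ ℝ) (t : ℤ) :
    henonAIMap b ε S0 z t = S0 t * Real.sqrt (1 + ε * (z (t+1) + b * z (t-1))) := rfl

set_option maxHeartbeats 1000000 in
/-- **Existence and uniqueness of Hénon orbits near the anti-integrable limit.**
If `|ε|(1+|b|) < 2√(1 − 2/√5)`, then for every symbol sequence `s : ℤ → {−1, +1}`
there is exactly one bounded sequence `z : ℤ → ℝ` with `s t * z t > 0` for all `t`
satisfying the Hénon recurrence `ε(z_{t+1} + b z_{t−1}) + 1 − z_t² = 0` for all `t`. -/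
theorem henon_ai_exists_unique (b ε : ℝ)
    (hparam : |ε| * (1 + |b|) < 2 * Real.sqrt (1 - 2 / Real.sqrt 5))
    (s : ℤ → ℝ) (hs : ∀ t : ℤ, s t = -1 ∨ s t = 1) :
    ∃! z : ℤ → ℝ,
      (∃ M : ℝ, ∀ t : ℤ, |z t| ≤ M) ∧
      (∀ t : ℤ, s t * z t > 0) ∧
      (∀ t : ℤ, ε * (z (t + 1) + b * z (t - 1)) + 1 - (z t) ^ 2 = 0) := by
  classical
  set c := |ε| * (1 + |b|) with hcdef
  have hc0 : 0 ≤ c := by positivity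
  obtain ⟨hkey, hc1⟩ := henon_key hc0 hparam
  set R := Real.sqrt (c^2+4) with hRdef
  have hRsq : R^2 = c^2+4 := Real.sq_sqrt (by positivity)
  have hR0 : 0 ≤ R := Real.sqrt_nonneg _
  have hR2 : 2 ≤ R := by nlinarith
  set M := (c + R)/2 with hMdef
  have hM1 : 1 ≤ M := by rw [hMdef]; linarith
  have hMsq : M^2 = 1 + c*M := by rw [hMdef]; nlinarith [hRsq]
  have hcMval : c*M = (c^2 + c*R)/2 := by rw [hMdef]; ring
  have hcM4 : c^2 + 4*(c*M) < 4 := by rw [hcMval]; linarith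
  have hcM0 : 0 ≤ c*M := mul_nonneg hc0 (by linarith)
  have hcM1 : c*M < 1 := by nlinarith
  set m := Real.sqrt (1 - c*M) with hmdef
  have hmsq : m^2 = 1 - c*M := Real.sq_sqrt (by linarith)
  have hmpos : 0 < m := Real.sqrt_pos.2 (by linarith)
  have hm1 : m ≤ 1 := by nlinarith
  have hk2m : c < 2*m := by nlinarith
  -- symbol sequence facts
  have hs1 : ∀ t, |s t| = 1 := by intro t; rcases hs t with h | h <;> simp [h]
  have hssq : ∀ t, s t * s t = 1 := by
    intro t; rcases hs t with h | h <;> rw [h] <;> norm_num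
  set S0 : ℤ →ᵇ ℝ := BoundedContinuousFunction.ofNormedAddCommGroup s
    continuous_of_discreteTopology 1
    (fun t => by rw [Real.norm_eq_abs, hs1 t]) with hS0def
  have hS0 : ∀ t, S0 t = s t := fun t => rfl
  -- the invariant closed set
  set D : Set (ℤ →ᵇ ℝ) := {z | ∀ t, S0 t * z t ∈ Set.Icc m M} with hDdef
  have hDclosed : IsClosed D := by
    have hDeq : D = ⋂ t : ℤ, (fun z : ℤ →ᵇ ℝ => S0 t * z t) ⁻¹' (Set.Icc m M) := by
      ext z; simp [hDdef, Set.mem_iInter]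
    rw [hDeq]
    exact isClosed_iInter fun t => IsClosed.preimage
      (continuous_const.mul (continuous_eval_const t)) isClosed_Icc
  have habs : ∀ z ∈ D, ∀ t : ℤ, m ≤ |z t| ∧ |z t| ≤ M := by
    intro z hz t
    obtain ⟨h1, h2⟩ := hz t
    have e : |z t| = S0 t * z t := by
      rw [← abs_of_nonneg (le_trans hmpos.le h1), abs_mul, hS0, hs1, one_mul]
    rw [e]; exact ⟨h1, h2⟩
  have hAbound : ∀ z ∈ D, ∀ t : ℤ,
      m^2 ≤ 1 + ε * (z (t+1) + b * z (t-1)) ∧ 1 + ε * (z (t+1) + b * z (t-1)) ≤ M^2 := by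
    intro z hz t
    obtain ⟨h1l, h1u⟩ := habs z hz (t+1)
    obtain ⟨h2l, h2u⟩ := habs z hz (t-1)
    have hbd : |ε * (z (t+1) + b * z (t-1))| ≤ c*M := by
      calc |ε * (z (t+1) + b * z (t-1))| = |ε| * |z (t+1) + b * z (t-1)| := abs_mul _ _
        _ ≤ |ε| * (|z (t+1)| + |b| * |z (t-1)|) := by
            apply mul_le_mul_of_nonneg_left _ (abs_nonneg ε)
            calc |z (t+1) + b * z (t-1)| ≤ |z (t+1)| + |b * z (t-1)| := abs_add_le _ _
              _ = |z (t+1)| + |b| * |z (t-1)| := by rw [abs_mul]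
        _ ≤ |ε| * (M + |b| * M) := by
            apply mul_le_mul_of_nonneg_left _ (abs_nonneg ε)
            have := mul_le_mul_of_nonneg_left h2u (abs_nonneg b)
            linarith
        _ = c*M := by rw [hcdef]; ring
    obtain ⟨hbl, hbu⟩ := abs_le.1 hbd
    constructor
    · rw [hmsq]; linarith
    · rw [hMsq]; linarith
  have hmaps : Set.MapsTo (henonAIMap b ε S0) D D := by
    intro z hz t
    obtain ⟨hAl, hAu⟩ := hAbound z hz t
    rw [henonAIMap_apply, ← mul_assoc]
    have e1 : S0 t * S0 t = 1 := by rw [hS0]; exact hssq t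
    rw [e1, one_mul]
    constructor
    · rw [← Real.sqrt_sq hmpos.le]
      exact Real.sqrt_le_sqrt hAl
    · rw [← Real.sqrt_sq (by linarith : (0:ℝ) ≤ M)]
      exact Real.sqrt_le_sqrt hAu
  -- the contraction on the subtype
  set k : NNReal := ⟨c/(2*m), by positivity⟩ with hkdef
  have hkc : (k:ℝ) = c/(2*m) := rfl
  have hklt : k < 1 := by
    rw [← NNReal.coe_lt_coe, hkc, NNReal.coe_one]
    rw [div_lt_one (by positivity)]
    exact hk2m
  set FD : D → D := hmaps.restrict _ _ _ with hFDdef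
  have hFDval : ∀ x : D, (FD x : ℤ →ᵇ ℝ) = henonAIMap b ε S0 (x : ℤ →ᵇ ℝ) :=
    fun x => hmaps.val_restrict_apply x
  have hlip : LipschitzWith k FD := by
    apply LipschitzWith.of_dist_le_mul
    intro x y
    rw [Subtype.dist_eq, hFDval, hFDval]
    have hd0 : (0:ℝ) ≤ (k:ℝ) * dist x y := mul_nonneg k.2 dist_nonneg
    rw [show dist x y = dist (x : ℤ →ᵇ ℝ) (y : ℤ →ᵇ ℝ) from Subtype.dist_eq x y]
    apply (BoundedContinuousFunction.dist_le (by
      exact mul_nonneg k.2 dist_nonneg)).2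
    intro t
    rw [henonAIMap_apply, henonAIMap_apply, Real.dist_eq]
    set A := 1 + ε * ((x:ℤ→ᵇℝ) (t+1) + b * (x:ℤ→ᵇℝ) (t-1)) with hAdef
    set A' := 1 + ε * ((y:ℤ→ᵇℝ) (t+1) + b * (y:ℤ→ᵇℝ) (t-1)) with hA'def
    have e : |S0 t * Real.sqrt A - S0 t * Real.sqrt A'|
        = |Real.sqrt A - Real.sqrt A'| := by
      rw [← mul_sub, abs_mul, hS0, hs1, one_mul]
    rw [e]
    have hsd := henon_sqrt_diff hmpos (hAbound _ x.2 t).1 (hAbound _ y.2 t).1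
    have hAA : |A - A'| ≤ c * dist (x : ℤ →ᵇ ℝ) (y : ℤ →ᵇ ℝ) := by
      have d1 : |(x:ℤ→ᵇℝ) (t+1) - (y:ℤ→ᵇℝ) (t+1)| ≤ dist (x:ℤ→ᵇℝ) (y:ℤ→ᵇℝ) := by
        rw [← Real.dist_eq]; exact BoundedContinuousFunction.dist_coe_le_dist _
      have d2 : |(x:ℤ→ᵇℝ) (t-1) - (y:ℤ→ᵇℝ) (t-1)| ≤ dist (x:ℤ→ᵇℝ) (y:ℤ→ᵇℝ) := by
        rw [← Real.dist_eq]; exact BoundedContinuousFunction.dist_coe_le_dist _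
      have eAA : A - A' = ε * (((x:ℤ→ᵇℝ) (t+1) - (y:ℤ→ᵇℝ) (t+1))
          + b * ((x:ℤ→ᵇℝ) (t-1) - (y:ℤ→ᵇℝ) (t-1))) := by
        rw [hAdef, hA'def]; ring
      rw [eAA]
      calc |ε * (((x:ℤ→ᵇℝ) (t+1) - (y:ℤ→ᵇℝ) (t+1))
            + b * ((x:ℤ→ᵇℝ) (t-1) - (y:ℤ→ᵇℝ) (t-1)))|
          = |ε| * |((x:ℤ→ᵇℝ) (t+1) - (y:ℤ→ᵇℝ) (t+1))
            + b * ((x:ℤ→ᵇℝ) (t-1) - (y:ℤ→ᵇℝ) (t-1))| := abs_mul _ _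
        _ ≤ |ε| * (|(x:ℤ→ᵇℝ) (t+1) - (y:ℤ→ᵇℝ) (t+1)|
            + |b| * |(x:ℤ→ᵇℝ) (t-1) - (y:ℤ→ᵇℝ) (t-1)|) := by
            apply mul_le_mul_of_nonneg_left _ (abs_nonneg ε)
            calc |((x:ℤ→ᵇℝ) (t+1) - (y:ℤ→ᵇℝ) (t+1))
                + b * ((x:ℤ→ᵇℝ) (t-1) - (y:ℤ→ᵇℝ) (t-1))|
                ≤ |(x:ℤ→ᵇℝ) (t+1) - (y:ℤ→ᵇℝ) (t+1)|
                  + |b * ((x:ℤ→ᵇℝ) (t-1) - (y:ℤ→ᵇℝ) (t-1))| := abs_add_le _ _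
              _ = |(x:ℤ→ᵇℝ) (t+1) - (y:ℤ→ᵇℝ) (t+1)|
                  + |b| * |(x:ℤ→ᵇℝ) (t-1) - (y:ℤ→ᵇℝ) (t-1)| := by rw [abs_mul]
        _ ≤ |ε| * (dist (x:ℤ→ᵇℝ) (y:ℤ→ᵇℝ) + |b| * dist (x:ℤ→ᵇℝ) (y:ℤ→ᵇℝ)) := by
            apply mul_le_mul_of_nonneg_left _ (abs_nonneg ε)
            have := mul_le_mul_of_nonneg_left d2 (abs_nonneg b)
            linarith
        _ = c * dist (x:ℤ→ᵇℝ) (y:ℤ→ᵇℝ) := by rw [hcdef]; ring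
    rw [hkc]
    rw [div_mul_eq_mul_div, le_div_iff₀ (by positivity : (0:ℝ) < 2*m)]
    calc |Real.sqrt A - Real.sqrt A'| * (2*m) ≤ |A - A'| := hsd
      _ ≤ c * dist (x:ℤ→ᵇℝ) (y:ℤ→ᵇℝ) := hAA
      _ = c * dist (x:ℤ→ᵇℝ) (y:ℤ→ᵇℝ) := rfl
  have hcontr : ContractingWith k FD := ⟨hklt, hlip⟩
  have hS0mem : S0 ∈ D := by
    intro t
    have : S0 t * S0 t = 1 := by rw [hS0]; exact hssq t
    rw [this]; exact ⟨hm1, hM1⟩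
  haveI : Nonempty D := ⟨⟨S0, hS0mem⟩⟩
  haveI : CompleteSpace D := hDclosed.completeSpace_coe
  set zf : D := ContractingWith.fixedPoint FD hcontr with hzfdef
  have hfix : FD zf = zf := hcontr.fixedPoint_isFixedPt
  have hfixpt : ∀ t : ℤ, s t * Real.sqrt
      (1 + ε * ((zf:ℤ→ᵇℝ) (t+1) + b * (zf:ℤ→ᵇℝ) (t-1))) = (zf:ℤ→ᵇℝ) t := by
    intro t
    have := congrArg (fun u : D => (u : ℤ →ᵇ ℝ) t) hfix
    rw [hFDval, henonAIMap_apply, hS0] at this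
    exact this
  refine ⟨fun t => (zf:ℤ→ᵇℝ) t, ⟨⟨M, fun t => (habs _ zf.2 t).2⟩, ?_, ?_⟩, ?_⟩
  · intro t
    have h1 := (zf.2 t).1
    rw [hS0] at h1
    exact lt_of_lt_of_le hmpos h1
  · intro t
    have hA := (hAbound _ zf.2 t).1
    have hA0 : (0:ℝ) ≤ 1 + ε * ((zf:ℤ→ᵇℝ) (t+1) + b * (zf:ℤ→ᵇℝ) (t-1)) :=
      le_trans (by positivity) hA
    have := hfixpt t
    have hsq2 : ((zf:ℤ→ᵇℝ) t)^2 = 1 + ε * ((zf:ℤ→ᵇℝ) (t+1) + b * (zf:ℤ→ᵇℝ) (t-1)) := by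
      rw [← this, mul_pow, Real.sq_sqrt hA0]
      have : (s t)^2 = 1 := by rw [sq]; exact hssq t
      rw [this, one_mul]
    rw [hsq2]; ring
  -- uniqueness
  · intro w hw
    obtain ⟨⟨M0, hM0⟩, hwsign, hwrec⟩ := hw
    have hwA : ∀ t : ℤ, (w t)^2 = 1 + ε * (w (t+1) + b * w (t-1)) := by
      intro t; have := hwrec t; linarith
    set Ms := sSup (Set.range fun t => |w t|) with hMsdef
    have hbddw : BddAbove (Set.range fun t => |w t|) := ⟨M0, by rintro x ⟨t, rfl⟩; exact hM0 t⟩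
    have hnew : (Set.range fun t => |w t|).Nonempty := ⟨|w 0|, ⟨0, rfl⟩⟩
    have hlew : ∀ t, |w t| ≤ Ms := fun t => le_csSup hbddw ⟨t, rfl⟩
    have hMs0 : 0 ≤ Ms := le_trans (abs_nonneg _) (hlew 0)
    have hwbd : ∀ t : ℤ, |ε * (w (t+1) + b * w (t-1))| ≤ c * Ms := by
      intro t
      calc |ε * (w (t+1) + b * w (t-1))| = |ε| * |w (t+1) + b * w (t-1)| := abs_mul _ _
        _ ≤ |ε| * (|w (t+1)| + |b| * |w (t-1)|) := by
            apply mul_le_mul_of_nonneg_left _ (abs_nonneg ε)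
            calc |w (t+1) + b * w (t-1)| ≤ |w (t+1)| + |b * w (t-1)| := abs_add_le _ _
              _ = |w (t+1)| + |b| * |w (t-1)| := by rw [abs_mul]
        _ ≤ |ε| * (Ms + |b| * Ms) := by
            apply mul_le_mul_of_nonneg_left _ (abs_nonneg ε)
            have := mul_le_mul_of_nonneg_left (hlew (t-1)) (abs_nonneg b)
            linarith [hlew (t+1)]
        _ = c * Ms := by rw [hcdef]; ring
    have hub : ∀ t : ℤ, (w t)^2 ≤ 1 + c*Ms := by
      intro t; rw [hwA t]
      linarith [(abs_le.1 (hwbd t)).2]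
    have hMsle : Ms ≤ Real.sqrt (1 + c*Ms) := by
      apply csSup_le hnew
      rintro x ⟨t, rfl⟩
      show |w t| ≤ Real.sqrt (1 + c*Ms)
      rw [← Real.sqrt_sq (abs_nonneg (w t))]
      apply Real.sqrt_le_sqrt
      rw [sq_abs]; exact hub t
    have hMssq : Ms^2 ≤ 1 + c*Ms := by
      have h1 : (0:ℝ) ≤ 1 + c*Ms := by positivity
      calc Ms^2 ≤ (Real.sqrt (1 + c*Ms))^2 := pow_le_pow_left₀ hMs0 hMsle 2
        _ = 1 + c*Ms := Real.sq_sqrt h1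
    have hMsM : Ms ≤ M := by
      by_contra hlt
      push_neg at hlt
      have hp : 0 < (Ms - M)*(Ms + M - c) :=
        mul_pos (sub_pos.2 hlt) (by linarith)
      have hexp : (Ms - M)*(Ms + M - c) = Ms^2 - M^2 - c*Ms + c*M := by ring
      linarith
    have habsw : ∀ t, s t * w t = |w t| := by
      intro t
      rcases hs t with h | h
      · have hww := hwsign t
        rw [h, neg_one_mul] at hww
        rw [h, neg_one_mul, abs_of_neg (neg_pos.mp hww)]
      · have hww := hwsign t
        rw [h, one_mul] at hww
        rw [h, one_mul, abs_of_pos hww]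
    have hwlb : ∀ t, m ≤ |w t| := by
      intro t
      have h1 : 1 - c*Ms ≤ (w t)^2 := by
        rw [hwA t]; linarith [(abs_le.1 (hwbd t)).1]
      have h2 : m^2 ≤ (w t)^2 := by
        have : c*Ms ≤ c*M := mul_le_mul_of_nonneg_left hMsM hc0
        rw [hmsq]; linarith
      nlinarith [abs_nonneg (w t), sq_abs (w t), hmpos.le]
    set W : ℤ →ᵇ ℝ := BoundedContinuousFunction.ofNormedAddCommGroup w
      continuous_of_discreteTopology M0
      (fun t => by rw [Real.norm_eq_abs]; exact hM0 t) with hWdef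
    have hWcoe : ∀ t, W t = w t := fun t => rfl
    have hWD : W ∈ D := by
      intro t
      rw [hS0, hWcoe, habsw t]
      exact ⟨hwlb t, le_trans (hlew t) hMsM⟩
    have hWfix : FD ⟨W, hWD⟩ = ⟨W, hWD⟩ := by
      apply Subtype.ext
      rw [hFDval]
      apply BoundedContinuousFunction.ext
      intro t
      rw [henonAIMap_apply, hS0]
      show s t * Real.sqrt (1 + ε * (w (t+1) + b * w (t-1))) = w t
      rw [← hwA t, Real.sqrt_sq_eq_abs, ← habsw t, ← mul_assoc, hssq t, one_mul]
    have heq : (⟨W, hWD⟩ : D) = zf := hcontr.fixedPoint_unique hWfix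
    funext t
    have := congrArg (fun u : D => (u : ℤ →ᵇ ℝ) t) heq
    simpa [hWcoe] using this
end

section
/- Let b, ε ∈ ℝ satisfy |ε|(1+|b|) < 2√(1 − 2/√5), let s : ℤ → {−1,+1} be a symbol sequence, and let z : ℤ → ℝ be a bounded sequence with s_t · z_t > 0 for all t satisfying ε(z_{t+1} + b z_{t−1}) + 1 − z_t² = 0 for all t. Then the linear operator L on the Banach space ℓ^∞(ℤ, ℝ) defined by (Lv)_t = ε v_{t+1} + ε b v_{t−1} − 2 z_t v_t is a continuous linear bijection whose inverse is also continuous (i.e., L is boundedly invertible). -/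
noncomputable section

private abbrev Einf := lp (fun _ : ℤ => ℝ) ⊤

/-- Weighted shift operator on ℓ^∞(ℤ,ℝ). -/
private noncomputable def ws (a : ℤ → ℝ) (k : ℤ) (C : ℝ) (hC : ∀ t, |a t| ≤ C) :
    Einf →L[ℝ] Einf :=
  LinearMap.mkContinuous
    { toFun := fun v => ⟨fun t => a t * (v : ℤ → ℝ) (t + k), by
        apply memℓp_infty
        refine ⟨C * ‖v‖, ?_⟩
        rintro x ⟨t, rfl⟩
        simp only [Real.norm_eq_abs, abs_mul]
        exact mul_le_mul (hC t) (lp.norm_apply_le_norm ENNReal.top_ne_zero v (t+k))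
          (abs_nonneg _) ((abs_nonneg _).trans (hC 0))⟩
      map_add' := fun u v => by ext t; simp [mul_add]; rfl
      map_smul' := fun c v => by ext t; simp; ring }
    C
    (fun v => by
      apply lp.norm_le_of_forall_le (mul_nonneg ((abs_nonneg _).trans (hC 0)) (norm_nonneg v))
      intro t
      show |a t * (v : ℤ → ℝ) (t + k)| ≤ C * ‖v‖
      rw [abs_mul]
      exact mul_le_mul (hC t) (lp.norm_apply_le_norm ENNReal.top_ne_zero v (t+k))
        (abs_nonneg _) ((abs_nonneg _).trans (hC 0)))

private lemma ws_apply (a : ℤ → ℝ) (k : ℤ) (C : ℝ) (hC : ∀ t, |a t| ≤ C) (v : Einf) (t : ℤ) :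
    ((ws a k C hC v) : ℤ → ℝ) t = a t * (v : ℤ → ℝ) (t + k) := rfl

private lemma ws_norm (a : ℤ → ℝ) (k : ℤ) (C : ℝ) (hC : ∀ t, |a t| ≤ C) (hC0 : 0 ≤ C) :
    ‖ws a k C hC‖ ≤ C := LinearMap.mkContinuous_norm_le _ hC0 _

set_option maxHeartbeats 1000000 in
private lemma henon_aux {c M : ℝ} (hc : 0 ≤ c) (hM : 0 ≤ M)
    (hM2 : M^2 ≤ 1 + c*M) (hcb : c < 2*Real.sqrt (1 - 2/Real.sqrt 5)) :
    c^2 + 4*c*M < 4 := by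
  set u := Real.sqrt 5 with hu
  have hu2 : (2:ℝ) < u := by
    have : (2:ℝ) = Real.sqrt 4 := by
      rw [show (4:ℝ) = 2^2 by norm_num, Real.sqrt_sq (by norm_num : (0:ℝ) ≤ 2)]
    rw [this]
    exact Real.sqrt_lt_sqrt (by norm_num) (by norm_num)
  have hu5 : u^2 = 5 := Real.sq_sqrt (by norm_num)
  have hu0 : (0:ℝ) < u := by linarith
  have hδ : (0:ℝ) ≤ 1 - 2/u := by
    have : 2/u < 1 := (div_lt_one hu0).2 hu2
    linarith
  have hsq : (Real.sqrt (1 - 2/u))^2 = 1 - 2/u := Real.sq_sqrt hδ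
  have hc2 : c^2 < 4*(1 - 2/u) := by
    nlinarith [hsq, Real.sqrt_nonneg (1 - 2/u)]
  have h8u : 8/u = (8/5)*u := by
    field_simp
    nlinarith [hu5]
  have hx : c^2 < 4 - (8/5)*u := by
    have : 4*(1 - 2/u) = 4 - 8/u := by ring
    linarith [h8u]
  have h3c : 3*c^2 < 4 := by nlinarith
  set q := Real.sqrt (c^2+4) with hq
  have hq0 : 0 ≤ q := Real.sqrt_nonneg _
  have hq2 : q^2 = c^2+4 := Real.sq_sqrt (by positivity)
  have hMq : 2*M ≤ c + q := by
    rcases le_or_gt (2*M) c with h | h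
    · linarith
    · have h1 : (2*M-c)^2 ≤ q^2 := by nlinarith
      have := le_of_pow_le_pow_left₀ two_ne_zero hq0 h1
      linarith
  have hprod : 0 < (4 - (8/5)*u - c^2) * (4 + (8/5)*u - c^2) := by
    apply mul_pos
    · linarith
    · nlinarith
  have h5 : 0 < 5*(c^2)^2 - 40*c^2 + 16 := by nlinarith [hprod, hu5]
  have hcq : c^2*q^2 = c^2*(c^2+4) := by rw [hq2]
  have h4 : (2*c*q)^2 < (4-3*c^2)^2 := by nlinarith [h5, hcq]
  have hkey : 2*c*q < 4 - 3*c^2 :=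
    lt_of_pow_lt_pow_left₀ 2 (by linarith) h4
  nlinarith [mul_le_mul_of_nonneg_left hMq (mul_nonneg (by norm_num : (0:ℝ) ≤ 2) hc)]

end

set_option maxHeartbeats 1600000 in
/-- **Bounded invertibility of the linearization at a Hénon orbit.**
Under the anti-integrable parameter bound, the linearization
`(Lv)_t = ε v_{t+1} + ε b v_{t−1} − 2 z_t v_t` of the Hénon recurrence at the
orbit `z` with symbol sequence `s` is a boundedly invertible operator on
`ℓ^∞(ℤ, ℝ)`; i.e. there is a continuous linear equivalence with this formula. -/
theorem henon_linearization_invertible (b ε : ℝ)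
    (hparam : |ε| * (1 + |b|) < 2 * Real.sqrt (1 - 2 / Real.sqrt 5))
    (s : ℤ → ℝ) (hs : ∀ t : ℤ, s t = -1 ∨ s t = 1)
    (z : ℤ → ℝ) (hbdd : ∃ M : ℝ, ∀ t : ℤ, |z t| ≤ M)
    (hsz : ∀ t : ℤ, s t * z t > 0)
    (horbit : ∀ t : ℤ, ε * (z (t + 1) + b * z (t - 1)) + 1 - (z t) ^ 2 = 0) :
    ∃ L : lp (fun _ : ℤ => ℝ) ⊤ ≃L[ℝ] lp (fun _ : ℤ => ℝ) ⊤,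
      ∀ (v : lp (fun _ : ℤ => ℝ) ⊤) (t : ℤ),
        (L v : ℤ → ℝ) t = ε * (v : ℤ → ℝ) (t + 1) + ε * b * (v : ℤ → ℝ) (t - 1)
          - 2 * z t * (v : ℤ → ℝ) t := by
  classical
  set c : ℝ := |ε| * (1 + |b|) with hcdef
  have hc0 : 0 ≤ c := by positivity
  -- the supremum of |z|
  obtain ⟨M, hM⟩ := hbdd
  set M₀ : ℝ := sSup (Set.range fun t => |z t|) with hM₀
  have hbddA : BddAbove (Set.range fun t => |z t|) := ⟨M, by rintro x ⟨t, rfl⟩; exact hM t⟩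
  have hub : ∀ t, |z t| ≤ M₀ := fun t => le_csSup hbddA ⟨t, rfl⟩
  have hM0 : 0 ≤ M₀ := (abs_nonneg (z 0)).trans (hub 0)
  -- bounds from the orbit equation
  have hbound : ∀ t : ℤ, |ε * (z (t+1) + b * z (t-1))| ≤ c * M₀ := by
    intro t
    rw [abs_mul]
    have habs : |z (t+1) + b * z (t-1)| ≤ M₀ + |b| * M₀ := by
      refine (abs_add_le _ _).trans ?_
      rw [abs_mul]
      exact add_le_add (hub _) (mul_le_mul_of_nonneg_left (hub _) (abs_nonneg b))
    calc |ε| * |z (t+1) + b * z (t-1)| ≤ |ε| * (M₀ + |b| * M₀) :=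
          mul_le_mul_of_nonneg_left habs (abs_nonneg ε)
      _ = c * M₀ := by rw [hcdef]; ring
  have hz2le : ∀ t : ℤ, (z t)^2 ≤ 1 + c * M₀ := fun t => by
    have h := horbit t
    have hb := hbound t
    have := le_abs_self (ε * (z (t+1) + b * z (t-1)))
    linarith
  have hz2ge : ∀ t : ℤ, 1 - c * M₀ ≤ (z t)^2 := fun t => by
    have h := horbit t
    have hb := hbound t
    have := neg_abs_le (ε * (z (t+1) + b * z (t-1)))
    linarith
  -- the self-consistent bound on M₀
  have hM2 : M₀^2 ≤ 1 + c * M₀ := by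
    have h1cM : (0:ℝ) ≤ 1 + c * M₀ := by positivity
    have hle : M₀ ≤ Real.sqrt (1 + c * M₀) := by
      refine csSup_le ⟨|z 0|, 0, rfl⟩ ?_
      rintro x ⟨t, rfl⟩
      show |z t| ≤ Real.sqrt (1 + c * M₀)
      rw [← Real.sqrt_sq_eq_abs]
      exact Real.sqrt_le_sqrt (hz2le t)
    nlinarith [Real.sq_sqrt h1cM]
  have hmain : c^2 + 4*c*M₀ < 4 := henon_aux hc0 hM0 hM2 hparam
  have hcM1 : c * M₀ < 1 := by nlinarith [sq_nonneg c]
  -- the uniform lower bound on |z|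
  set m : ℝ := Real.sqrt (1 - c * M₀) with hmdef
  have hm0 : 0 < m := Real.sqrt_pos.2 (by linarith)
  have hm2 : m^2 = 1 - c * M₀ := Real.sq_sqrt (by linarith)
  have hzlow : ∀ t, m ≤ |z t| := fun t => by
    rw [← Real.sqrt_sq_eq_abs, hmdef]
    exact Real.sqrt_le_sqrt (hz2ge t)
  have hzne : ∀ t, z t ≠ 0 := fun t h => by
    have := hzlow t; rw [h] at this; simp at this; linarith
  have hclt : c < 2*m := by
    have h4 : c^2 < (2*m)^2 := by nlinarith
    exact lt_of_pow_lt_pow_left₀ 2 (by linarith) h4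
  -- the operators
  set D := ws (fun t => -2 * z t) 0 (2*M₀) (fun t => by
    rw [abs_mul]; simp only [abs_neg]
    calc |(2:ℝ)| * |z t| = 2 * |z t| := by norm_num
      _ ≤ 2 * M₀ := by linarith [hub t]) with hD
  set Dinv := ws (fun t => (-2 * z t)⁻¹) 0 ((2*m)⁻¹) (fun t => by
    rw [abs_inv]
    apply inv_anti₀ (by linarith)
    rw [abs_mul]
    calc 2*m ≤ 2 * |z t| := by linarith [hzlow t]
      _ = |(-2:ℝ)| * |z t| := by norm_num) with hDinv
  set K1 := ws (fun _ => ε) 1 |ε| (fun _ => le_refl _) with hK1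
  set K2 := ws (fun _ => ε * b) (-1) |ε * b| (fun _ => le_refl _) with hK2
  set T := Dinv.comp (K1 + K2) with hT
  -- composition identities
  have hDDinv : D * Dinv = 1 := by
    ext v t
    show (-2 * z (t)) * ((Dinv v : ℤ → ℝ) (t + 0)) = (v : ℤ → ℝ) t
    rw [ws_apply]
    simp only [add_zero]
    field_simp
    exact mul_div_cancel_left₀ _ (hzne t)
  have hDinvD : Dinv * D = 1 := by
    ext v t
    show (-2 * z (t))⁻¹ * ((D v : ℤ → ℝ) (t + 0)) = (v : ℤ → ℝ) t
    rw [ws_apply]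
    simp only [add_zero]
    field_simp
    exact mul_div_cancel_left₀ _ (hzne t)
  -- the norm bound
  have hKnorm : ‖K1 + K2‖ ≤ c := by
    calc ‖K1 + K2‖ ≤ ‖K1‖ + ‖K2‖ := norm_add_le _ _
      _ ≤ |ε| + |ε * b| :=
        add_le_add (ws_norm _ _ _ _ (abs_nonneg _)) (ws_norm _ _ _ _ (abs_nonneg _))
      _ = c := by rw [hcdef, abs_mul]; ring
  have hTnorm : ‖T‖ < 1 := by
    calc ‖T‖ ≤ ‖Dinv‖ * ‖K1 + K2‖ := ContinuousLinearMap.opNorm_comp_le _ _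
      _ ≤ (2*m)⁻¹ * c := by
        apply mul_le_mul (ws_norm _ _ _ _ (by positivity)) hKnorm (norm_nonneg _) (by positivity)
      _ = c / (2*m) := by ring
      _ < 1 := (div_lt_one (by linarith)).2 hclt
  -- assemble the unit
  have hTn : ‖-T‖ < 1 := by rwa [norm_neg]
  set u1 : (lp (fun _ : ℤ => ℝ) ⊤ →L[ℝ] lp (fun _ : ℤ => ℝ) ⊤)ˣ := Units.oneSub (-T) hTn with hu1
  set uD : (lp (fun _ : ℤ => ℝ) ⊤ →L[ℝ] lp (fun _ : ℤ => ℝ) ⊤)ˣ :=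
    ⟨D, Dinv, hDDinv, hDinvD⟩ with huD
  refine ⟨ContinuousLinearEquiv.unitsEquiv ℝ _ (uD * u1), ?_⟩
  intro v t
  rw [ContinuousLinearEquiv.unitsEquiv_apply]
  show (((uD * u1 : _ˣ) : lp (fun _ : ℤ => ℝ) ⊤ →L[ℝ] lp (fun _ : ℤ => ℝ) ⊤) v : ℤ → ℝ) t = _
  have hval : ((uD * u1 : _ˣ) : lp (fun _ : ℤ => ℝ) ⊤ →L[ℝ] lp (fun _ : ℤ => ℝ) ⊤)
      = D * (1 - -T) := rfl
  rw [hval]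
  have : (D * (1 - -T)) v = D (v + T v) := by
    simp [ContinuousLinearMap.mul_apply, sub_neg_eq_add]
  rw [this]
  rw [ws_apply]
  simp only [add_zero]
  have hcoe : ((v + T v : lp (fun _ : ℤ => ℝ) ⊤) : ℤ → ℝ) t
      = (v : ℤ → ℝ) t + (T v : ℤ → ℝ) t := by
    rw [lp.coeFn_add]; rfl
  rw [hcoe]
  have hTvt : (T v : ℤ → ℝ) t
      = (-2 * z t)⁻¹ * (ε * (v : ℤ → ℝ) (t + 1) + ε * b * (v : ℤ → ℝ) (t + -1)) := by
    show ((Dinv ((K1 + K2) v)) : ℤ → ℝ) t = _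
    rw [ws_apply]
    simp only [add_zero]
    congr 1
  rw [hTvt]
  have ht1 : t + -1 = t - 1 := by ring
  rw [ht1]
  have hz : (-2 : ℝ) * z t ≠ 0 := by
    simp only [ne_eq, mul_eq_zero]
    push_neg
    exact ⟨by norm_num, hzne t⟩
  rw [mul_add, mul_inv_cancel_left₀ hz]
  ring
end

section
/- Let 0 ≤ b < 1 and 0 ≤ ε < ε_max, where ε_max = (2/(1+b))·√((−b² + 2b + 5 − 2√(5+4b))/((1−b)(5−b))). Then for every symbol sequence s : ℤ → {−1,+1} such that there is no t ∈ ℤ with s_{t−1} = −1 and s_{t+1} = −1, there exists exactly one bounded sequence z : ℤ → ℝ with s_t · z_t > 0 for all t satisfying ε(z_{t+1} + b z_{t−1}) + 1 − z_t² = 0 for all t ∈ ℤ. -/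
set_option maxHeartbeats 1000000


private lemma henon_aux1 (b ε s5 : ℝ) (hb0 : 0 ≤ b) (hb1 : b < 1) (hε0 : 0 ≤ ε)
    (hs5sq : s5 ^ 2 = 5 + 4 * b) (hs50 : 0 ≤ s5)
    (hq : ε^2 * (1+b)^2 * ((1-b)*(5-b)) < 4 * (5 + 2*b - b^2 - 2*s5)) :
    ε^2 * (1+b) * (3-b) < 4 := by
  have hs5lb : b + 2 ≤ s5 := by nlinarith
  have hs5' : (5:ℝ) + b ≤ s5 * (3-b) := by nlinarith
  have e1 : ε^2 * (1+b)^2 * ((1-b)*(5-b)) * (3-b) < 4 * (5 + 2*b - b^2 - 2*s5) * (3-b) :=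
    mul_lt_mul_of_pos_right hq (by linarith)
  have e2 : 4 * (5 + 2*b - b^2 - 2*s5) * (3-b) ≤ 4 * ((1-b)*(5-b)*(1+b)) := by nlinarith
  have hpos : (0:ℝ) < (1-b)*(5-b)*(1+b) := by nlinarith
  have e3 : (ε^2*(1+b)*(3-b)) * ((1-b)*(5-b)*(1+b)) < 4 * ((1-b)*(5-b)*(1+b)) := by
    nlinarith [e1, e2]
  exact (mul_lt_mul_iff_of_pos_right hpos).mp e3

private lemma henon_aux2 (b ε s5 T : ℝ) (hb0 : 0 ≤ b) (hb1 : b < 1) (hε0 : 0 ≤ ε)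
    (hs5sq : s5 ^ 2 = 5 + 4 * b) (hs50 : 0 ≤ s5)
    (hTsq : T ^ 2 = ε^2*(1+b)^2 + 4) (hT0 : 0 ≤ T)
    (hq : ε^2 * (1+b)^2 * ((1-b)*(5-b)) < 4 * (5 + 2*b - b^2 - 2*s5)) :
    2*ε*T < 4 - ε^2*(1+b)*(3-b) := by
  have h4 := henon_aux1 b ε s5 hb0 hb1 hε0 hs5sq hs50 hq
  set A := 5 + 2*b - b^2 with hA
  set q := ε^2*(1+b)^2*((1-b)*(5-b))/4 with hqdef
  have hq4 : q < A - 2*s5 := by rw [hqdef, hA]; linarith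
  have t1 : 0 < A - q - 2*s5 := by linarith
  have t2 : 0 < A - q + 2*s5 := by linarith
  have hfac : 0 < (A - q)^2 - (2*s5)^2 := by nlinarith [mul_pos t1 t2]
  have hid : (2*s5)^2 = A^2 - (1-b)*(5-b)*(1+b)^2 := by rw [hA]; linear_combination 4*hs5sq
  have hq2 : 0 < q^2 - 2*A*q + (1-b)*(5-b)*(1+b)^2 := by nlinarith [hfac, hid]
  have hDpos : (0:ℝ) < (1-b)*(5-b)*(1+b)^2 :=
    mul_pos (mul_pos (by linarith) (by linarith)) (by positivity)
  have hmul : ((1-b)*(5-b)*(1+b)^2) * (16 - 8*A*ε^2 + ((1-b)*(5-b)*(1+b)^2)*ε^4)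
      = 16*(q^2 - 2*A*q + (1-b)*(5-b)*(1+b)^2) := by rw [hqdef]; ring
  have hpoly : 0 < 16 - 8*A*ε^2 + ((1-b)*(5-b)*(1+b)^2)*ε^4 := by
    by_contra h
    push_neg at h
    have h6 : ((1-b)*(5-b)*(1+b)^2) * (16 - 8*A*ε^2 + ((1-b)*(5-b)*(1+b)^2)*ε^4) ≤ 0 :=
      mul_nonpos_iff.mpr (Or.inl ⟨hDpos.le, h⟩)
    rw [hmul] at h6
    linarith
  have hsq : (2*ε*T)^2 < (4 - ε^2*(1+b)*(3-b))^2 := by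
    have hL : (2*ε*T)^2 = 4*ε^2*(ε^2*(1+b)^2+4) := by
      have h5 : (2*ε*T)^2 = 4*ε^2*T^2 := by ring
      rw [h5, hTsq]
    have hI : (4 - ε^2*(1+b)*(3-b))^2 - 4*ε^2*(ε^2*(1+b)^2+4)
        = 16 - 8*A*ε^2 + ((1-b)*(5-b)*(1+b)^2)*ε^4 := by rw [hA]; ring
    linarith
  have hrhs : 0 < 4 - ε^2*(1+b)*(3-b) := by linarith
  nlinarith [hsq, hrhs, mul_nonneg (mul_nonneg (by norm_num : (0:ℝ) ≤ 2) hε0) hT0]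

private lemma henon_aux3 (b ε T : ℝ) (hb0 : 0 ≤ b) (hb1 : b < 1) (hε0 : 0 ≤ ε)
    (hstar : 2*ε*T < 4 - ε^2*(1+b)*(3-b)) :
    ε * ((ε*(1+b) + T)/2) < 1 := by
  nlinarith [mul_nonneg (mul_nonneg (sq_nonneg ε) (by linarith : (0:ℝ) ≤ 1+b))
    (by linarith : (0:ℝ) ≤ 1 - b)]

private lemma henon_aux5 (b ε T U : ℝ) (hb0 : 0 ≤ b) (hb1 : b < 1) (hε0 : 0 ≤ ε)
    (hUsq : U ^ 2 = ε^2*b^2 + 4*(1 - ε*((ε*(1+b) + T)/2))) (hU0 : 0 < U)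
    (hstar : 2*ε*T < 4 - ε^2*(1+b)*(3-b)) :
    ε < U := by
  have h2 : ε^2 < U^2 := by rw [hUsq]; nlinarith [hstar]
  nlinarith [h2, hU0, hε0]

private lemma henon_aux6 (b ε m M : ℝ) (hb0 : 0 ≤ b) (hb1 : b < 1) (hε0 : 0 ≤ ε)
    (hm0 : 0 < m) (hmsq : m ^ 2 = 1 + ε*(b*m - M))
    (hMsq : M ^ 2 = 1 + ε*(1+b)*M) (hM1 : 1 ≤ M)
    (hεM : ε * M < 1) :
    m ≤ 1 := by
  have hε1 : ε < 1 := by nlinarith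
  have hεb : ε*b < 1 := by nlinarith
  have h3 : ε*b*m < m := by nlinarith [mul_pos (show (0:ℝ) < 1 - ε*b by linarith) hm0]
  have hεM0 : 0 ≤ ε*M := mul_nonneg hε0 (by linarith)
  have hm2 : m < 2 := by nlinarith [h3, hεM0]
  have hbm : b*m ≤ (2+b)*M := by nlinarith
  have h2 : m^2 ≤ M^2 := by nlinarith [mul_nonneg hε0 (sub_nonneg.mpr hbm)]
  have hmM : m ≤ M := by nlinarith
  have hbm2 : b*m ≤ M := by nlinarith
  nlinarith [mul_nonneg hε0 (sub_nonneg.mpr hbm2)]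

lemma henon_params (b ε : ℝ) (hb0 : 0 ≤ b) (hb1 : b < 1) (hε0 : 0 ≤ ε)
    (hε : ε < (2 / (1 + b)) *
      Real.sqrt ((-b ^ 2 + 2 * b + 5 - 2 * Real.sqrt (5 + 4 * b)) / ((1 - b) * (5 - b)))) :
    ∃ m M : ℝ, 0 < m ∧ m ≤ 1 ∧ 1 ≤ M ∧
      1 + ε * (1 + b) * M ≤ M ^ 2 ∧ m ^ 2 ≤ 1 + ε * (b * m - M) ∧ ε * (1 + b) < 2 * m := by
  have hc : (0:ℝ) < 1 + b := by linarith
  set s5 := Real.sqrt (5 + 4 * b) with hs5def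
  have hs5sq : s5 ^ 2 = 5 + 4 * b := Real.sq_sqrt (by linarith)
  have hs50 : 0 ≤ s5 := Real.sqrt_nonneg _
  have hden : (0:ℝ) < (1 - b) * (5 - b) := by nlinarith
  have hR : ε * (1+b) / 2 < Real.sqrt ((-b ^ 2 + 2 * b + 5 - 2 * s5) / ((1 - b) * (5 - b))) := by
    have h2 := mul_lt_mul_of_pos_right hε (by positivity : (0:ℝ) < (1+b)/2)
    calc ε * (1+b) / 2 = ε * ((1+b)/2) := by ring
    _ < (2 / (1 + b)) * Real.sqrt ((-b ^ 2 + 2 * b + 5 - 2 * s5) / ((1 - b) * (5 - b))) * ((1+b)/2) := h2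
    _ = Real.sqrt ((-b ^ 2 + 2 * b + 5 - 2 * s5) / ((1 - b) * (5 - b))) := by field_simp
  have hq' : (ε * (1+b) / 2) ^ 2 < (-b ^ 2 + 2 * b + 5 - 2 * s5) / ((1 - b) * (5 - b)) :=
    (Real.lt_sqrt (by positivity)).mp hR
  have hq : ε^2 * (1+b)^2 * ((1-b)*(5-b)) < 4 * (5 + 2*b - b^2 - 2*s5) := by
    have h3 := mul_lt_mul_of_pos_right hq' hden
    rw [div_mul_cancel₀ _ (ne_of_gt hden)] at h3
    nlinarith [h3]
  set T := Real.sqrt (ε^2*(1+b)^2 + 4) with hTdef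
  have hTsq : T ^ 2 = ε^2*(1+b)^2 + 4 := Real.sq_sqrt (by positivity)
  have hT0 : 0 ≤ T := Real.sqrt_nonneg _
  have hT2 : 2 ≤ T := by nlinarith [hTsq, hT0, sq_nonneg (ε*(1+b))]
  have hstar := henon_aux2 b ε s5 T hb0 hb1 hε0 hs5sq hs50 hTsq hT0 hq
  have hεM : ε * ((ε*(1+b) + T)/2) < 1 := henon_aux3 b ε T hb0 hb1 hε0 hstar
  have hargpos : 0 < ε^2*b^2 + 4*(1 - ε*((ε*(1+b) + T)/2)) := by
    nlinarith [sq_nonneg (ε*b), hεM]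
  set U := Real.sqrt (ε^2*b^2 + 4*(1 - ε*((ε*(1+b) + T)/2))) with hUdef
  have hUsq : U ^ 2 = ε^2*b^2 + 4*(1 - ε*((ε*(1+b) + T)/2)) := Real.sq_sqrt hargpos.le
  have hU0 : 0 < U := Real.sqrt_pos.mpr hargpos
  have hεU : ε < U := henon_aux5 b ε T U hb0 hb1 hε0 hUsq hU0 hstar
  have hm0 : 0 < (ε*b + U)/2 := by positivity
  have hmsq : ((ε*b + U)/2) ^ 2 = 1 + ε*(b*((ε*b + U)/2) - (ε*(1+b) + T)/2) := by
    linear_combination hUsq / 4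
  have hMsq : ((ε*(1+b) + T)/2) ^ 2 = 1 + ε*(1+b)*((ε*(1+b) + T)/2) := by
    linear_combination hTsq / 4
  have hM1 : 1 ≤ (ε*(1+b) + T)/2 := by
    linarith only [hT2, mul_nonneg hε0 hc.le]
  have hk : ε*(1+b) < 2*((ε*b + U)/2) := by linarith only [hεU]
  have hm1 : (ε*b + U)/2 ≤ 1 :=
    henon_aux6 b ε ((ε*b + U)/2) ((ε*(1+b) + T)/2) hb0 hb1 hε0 hm0 hmsq hMsq hM1 hεM
  exact ⟨(ε*b + U)/2, (ε*(1+b) + T)/2, hm0, hm1, hM1, hMsq.ge, hmsq.le, hk⟩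


noncomputable def henonF (b ε : ℝ) (s : ℤ → ℝ) (z : ℤ → ℝ) : ℤ → ℝ :=
  fun t => s t * Real.sqrt (1 + ε * (z (t + 1) + b * z (t - 1)))

def henonBand (m M : ℝ) (s z : ℤ → ℝ) : Prop :=
  ∀ t : ℤ, m ≤ s t * z t ∧ s t * z t ≤ M

section key
variable {b ε m M : ℝ} {s : ℤ → ℝ}

lemma henon_sabs (hs : ∀ t : ℤ, s t = -1 ∨ s t = 1) (t : ℤ) : |s t| = 1 := by
  rcases hs t with h | h <;> rw [h] <;> norm_num

lemma henon_ssq (hs : ∀ t : ℤ, s t = -1 ∨ s t = 1) (t : ℤ) : s t * s t = 1 := by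
  rcases hs t with h | h <;> rw [h] <;> norm_num

lemma henon_band_abs (hs : ∀ t : ℤ, s t = -1 ∨ s t = 1) {z : ℤ → ℝ}
    (hm0 : 0 < m) (hz : henonBand m M s z) (t : ℤ) :
    |z t| = s t * z t := by
  have h1 : |s t * z t| = |z t| := by
    rw [abs_mul, henon_sabs hs, one_mul]
  rw [← h1, abs_of_nonneg (le_trans hm0.le (hz t).1)]

lemma henon_band_le (hs : ∀ t : ℤ, s t = -1 ∨ s t = 1) {z : ℤ → ℝ}
    (hm0 : 0 < m) (hz : henonBand m M s z) (t : ℤ) : |z t| ≤ M :=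
  (henon_band_abs hs hm0 hz t) ▸ (hz t).2

/-- bounds on the argument of the square root -/
lemma henon_arg_bound (hb0 : 0 ≤ b) (hb1 : b < 1) (hε0 : 0 ≤ ε)
    (hm0 : 0 < m) (hmM : m ≤ M)
    (hMq : 1 + ε * (1 + b) * M ≤ M ^ 2)
    (hmq : m ^ 2 ≤ 1 + ε * (b * m - M))
    (hs : ∀ t : ℤ, s t = -1 ∨ s t = 1)
    (hF : ∀ t : ℤ, s (t - 1) = 1 ∨ s (t + 1) = 1)
    {z : ℤ → ℝ} (hz : henonBand m M s z) (t : ℤ) :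
    m ^ 2 ≤ 1 + ε * (z (t + 1) + b * z (t - 1)) ∧
      1 + ε * (z (t + 1) + b * z (t - 1)) ≤ M ^ 2 := by
  have hM0 : 0 < M := lt_of_lt_of_le hm0 hmM
  have h1 := henon_band_le hs hm0 hz (t + 1)
  have h2 := henon_band_le hs hm0 hz (t - 1)
  have h1' := abs_le.mp h1
  have h2' := abs_le.mp h2
  constructor
  · rcases hF t with h | h
    · -- s (t-1) = 1 : z (t-1) ≥ m
      have h3 : m ≤ z (t - 1) := by
        have := (hz (t - 1)).1; rwa [h, one_mul] at this
      have e1 : ε * (b * m - M) ≤ ε * (z (t + 1) + b * z (t - 1)) := by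
        have p1 : b * m - M ≤ z (t + 1) + b * z (t - 1) := by
          have : b * m ≤ b * z (t - 1) := mul_le_mul_of_nonneg_left h3 hb0
          linarith [h1'.1]
        exact mul_le_mul_of_nonneg_left p1 hε0
      linarith
    · -- s (t+1) = 1 : z (t+1) ≥ m
      have h3 : m ≤ z (t + 1) := by
        have := (hz (t + 1)).1; rwa [h, one_mul] at this
      have e1 : ε * (b * m - M) ≤ ε * (z (t + 1) + b * z (t - 1)) := by
        have p1 : b * m - M ≤ z (t + 1) + b * z (t - 1) := by
          have q1 : b * (-M) ≤ b * z (t - 1) := mul_le_mul_of_nonneg_left h2'.1 hb0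
          nlinarith [h3, q1, hmM, hb1, hb0, hM0]
        exact mul_le_mul_of_nonneg_left p1 hε0
      linarith
  · have e1 : ε * (z (t + 1) + b * z (t - 1)) ≤ ε * (1 + b) * M := by
      have p1 : z (t + 1) + b * z (t - 1) ≤ (1 + b) * M := by
        have : b * z (t - 1) ≤ b * M := mul_le_mul_of_nonneg_left h2'.2 hb0
        linarith [h1'.2]
      calc ε * (z (t + 1) + b * z (t - 1)) ≤ ε * ((1 + b) * M) :=
            mul_le_mul_of_nonneg_left p1 hε0
      _ = ε * (1 + b) * M := by ring
    linarith

/-- the band is invariant under the Hénon fixed point map -/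
lemma henon_band_maps (hb0 : 0 ≤ b) (hb1 : b < 1) (hε0 : 0 ≤ ε)
    (hm0 : 0 < m) (hmM : m ≤ M)
    (hMq : 1 + ε * (1 + b) * M ≤ M ^ 2)
    (hmq : m ^ 2 ≤ 1 + ε * (b * m - M))
    (hs : ∀ t : ℤ, s t = -1 ∨ s t = 1)
    (hF : ∀ t : ℤ, s (t - 1) = 1 ∨ s (t + 1) = 1)
    {z : ℤ → ℝ} (hz : henonBand m M s z) :
    henonBand m M s (henonF b ε s z) := by
  intro t
  obtain ⟨hlo, hhi⟩ := henon_arg_bound hb0 hb1 hε0 hm0 hmM hMq hmq hs hF hz t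
  have hM0 : (0:ℝ) ≤ M := le_trans hm0.le hmM
  have harg0 : 0 ≤ 1 + ε * (z (t + 1) + b * z (t - 1)) := le_trans (sq_nonneg m) hlo
  have heq : s t * henonF b ε s z t = Real.sqrt (1 + ε * (z (t + 1) + b * z (t - 1))) := by
    unfold henonF
    rw [← mul_assoc, henon_ssq hs, one_mul]
  constructor
  · rw [heq]
    exact (Real.le_sqrt hm0.le harg0).mpr hlo
  · rw [heq]
    calc Real.sqrt (1 + ε * (z (t + 1) + b * z (t - 1))) ≤ Real.sqrt (M ^ 2) :=
          Real.sqrt_le_sqrt hhi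
    _ = M := Real.sqrt_sq hM0

/-- pointwise contraction estimate -/
lemma henon_lip (hb0 : 0 ≤ b) (hb1 : b < 1) (hε0 : 0 ≤ ε)
    (hm0 : 0 < m) (hmM : m ≤ M)
    (hMq : 1 + ε * (1 + b) * M ≤ M ^ 2)
    (hmq : m ^ 2 ≤ 1 + ε * (b * m - M))
    (hs : ∀ t : ℤ, s t = -1 ∨ s t = 1)
    (hF : ∀ t : ℤ, s (t - 1) = 1 ∨ s (t + 1) = 1)
    {z w : ℤ → ℝ} (hz : henonBand m M s z) (hw : henonBand m M s w)
    {d : ℝ} (hd : ∀ r : ℤ, |z r - w r| ≤ d) (t : ℤ) :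
    |henonF b ε s z t - henonF b ε s w t| ≤ (ε * (1 + b) / (2 * m)) * d := by
  obtain ⟨x, hx⟩ : ∃ x, x = 1 + ε * (z (t + 1) + b * z (t - 1)) := ⟨_, rfl⟩
  obtain ⟨y, hy⟩ : ∃ y, y = 1 + ε * (w (t + 1) + b * w (t - 1)) := ⟨_, rfl⟩
  have hxl : m ^ 2 ≤ x := hx ▸ (henon_arg_bound hb0 hb1 hε0 hm0 hmM hMq hmq hs hF hz t).1
  have hyl : m ^ 2 ≤ y := hy ▸ (henon_arg_bound hb0 hb1 hε0 hm0 hmM hMq hmq hs hF hw t).1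
  have hx0 : 0 ≤ x := le_trans (sq_nonneg m) hxl
  have hy0 : 0 ≤ y := le_trans (sq_nonneg m) hyl
  have hsx : m ≤ Real.sqrt x := (Real.le_sqrt hm0.le hx0).mpr hxl
  have hsy : m ≤ Real.sqrt y := (Real.le_sqrt hm0.le hy0).mpr hyl
  have hdiff : |henonF b ε s z t - henonF b ε s w t| = |Real.sqrt x - Real.sqrt y| := by
    unfold henonF
    rw [← hx, ← hy, ← mul_sub, abs_mul, henon_sabs hs, one_mul]
  have hprod : (Real.sqrt x - Real.sqrt y) * (Real.sqrt x + Real.sqrt y) = x - y := by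
    have e1 : Real.sqrt x ^ 2 = x := Real.sq_sqrt hx0
    have e2 : Real.sqrt y ^ 2 = y := Real.sq_sqrt hy0
    linear_combination e1 - e2
  have hsum : 2 * m ≤ Real.sqrt x + Real.sqrt y := by linarith
  have habs : |Real.sqrt x - Real.sqrt y| * (2 * m) ≤ |x - y| := by
    calc |Real.sqrt x - Real.sqrt y| * (2 * m)
        ≤ |Real.sqrt x - Real.sqrt y| * (Real.sqrt x + Real.sqrt y) :=
          mul_le_mul_of_nonneg_left hsum (abs_nonneg _)
    _ = |Real.sqrt x - Real.sqrt y| * |Real.sqrt x + Real.sqrt y| := by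
          rw [abs_of_nonneg (by linarith : (0:ℝ) ≤ Real.sqrt x + Real.sqrt y)]
    _ = |x - y| := by rw [← abs_mul, hprod]
  have hd0 : 0 ≤ d := le_trans (abs_nonneg _) (hd 0)
  have hxy : |x - y| ≤ ε * (1 + b) * d := by
    have e1 : x - y = ε * ((z (t + 1) - w (t + 1)) + b * (z (t - 1) - w (t - 1))) := by
      rw [hx, hy]; ring
    rw [e1, abs_mul, abs_of_nonneg hε0]
    have e2 : |(z (t + 1) - w (t + 1)) + b * (z (t - 1) - w (t - 1))| ≤ d + b * d := by
      calc |(z (t + 1) - w (t + 1)) + b * (z (t - 1) - w (t - 1))|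
          ≤ |z (t + 1) - w (t + 1)| + |b * (z (t - 1) - w (t - 1))| := abs_add_le _ _
      _ = |z (t + 1) - w (t + 1)| + b * |z (t - 1) - w (t - 1)| := by
            rw [abs_mul, abs_of_nonneg hb0]
      _ ≤ d + b * d := by
            have := mul_le_mul_of_nonneg_left (hd (t - 1)) hb0
            linarith [hd (t + 1)]
    calc ε * |(z (t + 1) - w (t + 1)) + b * (z (t - 1) - w (t - 1))| ≤ ε * (d + b * d) :=
          mul_le_mul_of_nonneg_left e2 hε0
    _ = ε * (1 + b) * d := by ring
  rw [hdiff]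
  rw [div_mul_eq_mul_div, le_div_iff₀ (by linarith : (0:ℝ) < 2 * m)]
  calc |Real.sqrt x - Real.sqrt y| * (2 * m) ≤ |x - y| := habs
  _ ≤ ε * (1 + b) * d := hxy

end key

lemma henon_key_s2 (b ε m M : ℝ) (hb0 : 0 ≤ b) (hb1 : b < 1) (hε0 : 0 ≤ ε)
    (hm0 : 0 < m) (hm1 : m ≤ 1) (hM1 : 1 ≤ M)
    (hMq : 1 + ε * (1 + b) * M ≤ M ^ 2)
    (hmq : m ^ 2 ≤ 1 + ε * (b * m - M))
    (hk : ε * (1 + b) < 2 * m)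
    (s : ℤ → ℝ) (hs : ∀ t : ℤ, s t = -1 ∨ s t = 1)
    (hF : ∀ t : ℤ, s (t - 1) = 1 ∨ s (t + 1) = 1) :
    ∃! z : ℤ → ℝ,
      (∃ M0 : ℝ, ∀ t : ℤ, |z t| ≤ M0) ∧
      (∀ t : ℤ, s t * z t > 0) ∧
      (∀ t : ℤ, ε * (z (t + 1) + b * z (t - 1)) + 1 - (z t) ^ 2 = 0) := by
  have hmM : m ≤ M := hm1.trans hM1
  have hM0 : (0:ℝ) < M := lt_of_lt_of_le one_pos hM1
  set k := ε * (1 + b) / (2 * m) with hkdef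
  have hk0 : 0 ≤ k := by
    apply div_nonneg (mul_nonneg hε0 (by linarith)) (by linarith)
  have hk1 : k < 1 := (div_lt_one (by linarith)).mpr hk
  -- the fixed point map and its key properties
  have hband_maps := fun {z} (hz : henonBand m M s z) =>
    henon_band_maps hb0 hb1 hε0 hm0 hmM hMq hmq hs hF hz
  have hlip := fun {z w} (hz : henonBand m M s z) (hw : henonBand m M s w)
      {d} (hd : ∀ r : ℤ, |z r - w r| ≤ d) (t : ℤ) =>
    henon_lip hb0 hb1 hε0 hm0 hmM hMq hmq hs hF hz hw hd t
  -- a fixed point in the band satisfies all three conditions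
  have hfix_props : ∀ z : ℤ → ℝ, henonBand m M s z → (∀ t, z t = henonF b ε s z t) →
      (∃ M0 : ℝ, ∀ t : ℤ, |z t| ≤ M0) ∧
      (∀ t : ℤ, s t * z t > 0) ∧
      (∀ t : ℤ, ε * (z (t + 1) + b * z (t - 1)) + 1 - (z t) ^ 2 = 0) := by
    intro z hz hfix
    refine ⟨⟨M, fun t => henon_band_le hs hm0 hz t⟩, fun t => lt_of_lt_of_le hm0 (hz t).1, ?_⟩
    intro t
    have harg := (henon_arg_bound hb0 hb1 hε0 hm0 hmM hMq hmq hs hF hz t).1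
    have harg0 : 0 ≤ 1 + ε * (z (t + 1) + b * z (t - 1)) := le_trans (sq_nonneg m) harg
    have h1 : z t ^ 2 = 1 + ε * (z (t + 1) + b * z (t - 1)) := by
      rw [hfix t]
      unfold henonF
      rw [mul_pow, Real.sq_sqrt harg0, sq, henon_ssq hs, one_mul]
    linarith
  -- uniqueness of fixed points in the band
  have huniq : ∀ z w : ℤ → ℝ, henonBand m M s z → henonBand m M s w →
      (∀ t, z t = henonF b ε s z t) → (∀ t, w t = henonF b ε s w t) → z = w := by
    intro z w hz hw hfz hfw
    have hbdd : BddAbove (Set.range fun t => |z t - w t|) := by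
      refine ⟨2 * M, ?_⟩
      rintro x ⟨t, rfl⟩
      have h1 := abs_le.mp (henon_band_le hs hm0 hz t)
      have h2 := abs_le.mp (henon_band_le hs hm0 hw t)
      rw [abs_le]; constructor <;> linarith
    set D := sSup (Set.range fun t => |z t - w t|) with hDdef
    have hD : ∀ t, |z t - w t| ≤ D := fun t => le_csSup hbdd ⟨t, rfl⟩
    have hD0 : 0 ≤ D := le_trans (abs_nonneg _) (hD 0)
    have hDk : D ≤ k * D := by
      apply csSup_le (Set.range_nonempty _)
      rintro x ⟨t, rfl⟩
      calc |z t - w t| = |henonF b ε s z t - henonF b ε s w t| := by rw [← hfz t, ← hfw t]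
      _ ≤ k * D := hlip hz hw hD t
    have hDz : D ≤ 0 := by nlinarith
    funext t
    have := le_antisymm (le_trans (hD t) hDz) (abs_nonneg _)
    have := abs_eq_zero.mp this
    linarith [this]
  -- the iteration
  set u : ℕ → ℤ → ℝ := fun n => (henonF b ε s)^[n] s with hudef
  have hu0 : henonBand m M s (u 0) := by
    intro t
    simp only [hudef, Function.iterate_zero, id]
    rw [henon_ssq hs]
    exact ⟨hm1, hM1⟩
  have husucc : ∀ n, u (n + 1) = henonF b ε s (u n) := by
    intro n
    simp only [hudef]
    exact Function.iterate_succ_apply' _ _ _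
  have hband : ∀ n, henonBand m M s (u n) := by
    intro n
    induction n with
    | zero => exact hu0
    | succ n ih => rw [husucc]; exact hband_maps ih
  have hdiff : ∀ n, ∀ t, |u (n + 1) t - u n t| ≤ (2 * M) * k ^ n := by
    intro n
    induction n with
    | zero =>
      intro t
      have h1 := abs_le.mp (henon_band_le hs hm0 (hband 1) t)
      have h2 : |u 0 t| = 1 := by
        simp only [hudef, Function.iterate_zero, id]
        exact henon_sabs hs t
      have h2' := abs_le.mp h2.le
      rw [pow_zero, mul_one, abs_le]
      constructor <;> linarith [h2'.1, h2'.2]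
    | succ n ih =>
      intro t
      have hstep := hlip (hband (n + 1)) (hband n) ih t
      rw [← husucc n, ← husucc (n + 1)] at hstep
      have he : k * ((2 * M) * k ^ n) = (2 * M) * k ^ (n + 1) := by ring
      calc |u (n + 1 + 1) t - u (n + 1) t| ≤ k * ((2 * M) * k ^ n) := hstep
      _ = (2 * M) * k ^ (n + 1) := he
  have hcauchy : ∀ t, ∃ x : ℝ, Filter.Tendsto (fun n => u n t) Filter.atTop (nhds x) := by
    intro t
    apply cauchySeq_tendsto_of_complete
    apply cauchySeq_of_le_geometric k (2 * M) hk1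
    intro n
    rw [Real.dist_eq, abs_sub_comm]
    exact hdiff n t
  choose z hz using hcauchy
  -- the limit is in the band
  have hzband : henonBand m M s z := by
    intro t
    have htend : Filter.Tendsto (fun n => s t * u n t) Filter.atTop (nhds (s t * z t)) :=
      (hz t).const_mul (s t)
    constructor
    · exact ge_of_tendsto htend (Filter.Eventually.of_forall fun n => (hband n t).1)
    · exact le_of_tendsto htend (Filter.Eventually.of_forall fun n => (hband n t).2)
  -- the limit is a fixed point
  have hzfix : ∀ t, z t = henonF b ε s z t := by
    intro t
    have h1 : Filter.Tendsto (fun n => u (n + 1) t) Filter.atTop (nhds (z t)) :=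
      (hz t).comp (Filter.tendsto_add_atTop_nat 1)
    have harg : Filter.Tendsto (fun n => 1 + ε * (u n (t + 1) + b * u n (t - 1)))
        Filter.atTop (nhds (1 + ε * (z (t + 1) + b * z (t - 1)))) := by
      exact ((((hz (t + 1)).add ((hz (t - 1)).const_mul b)).const_mul ε).const_add 1)
    have h2 : Filter.Tendsto (fun n => henonF b ε s (u n) t) Filter.atTop
        (nhds (henonF b ε s z t)) := by
      unfold henonF
      exact ((Real.continuous_sqrt.tendsto _).comp harg).const_mul (s t)
    have h3 : (fun n => u (n + 1) t) = fun n => henonF b ε s (u n) t := by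
      funext n
      rw [husucc n]
    rw [h3] at h1
    exact tendsto_nhds_unique h1 h2
  -- conclusion
  refine ⟨z, hfix_props z hzband hzfix, ?_⟩
  rintro w ⟨⟨M0, hwbd⟩, hwsgn, hwrec⟩
  -- any solution lies in the band
  have hwsq : ∀ t, w t ^ 2 = 1 + ε * (w (t + 1) + b * w (t - 1)) := by
    intro t
    linarith [hwrec t]
  have hbddw : BddAbove (Set.range fun t => |w t|) := ⟨M0, by rintro x ⟨t, rfl⟩; exact hwbd t⟩
  set M' := sSup (Set.range fun t => |w t|) with hM'def
  have hub : ∀ t, |w t| ≤ M' := fun t => le_csSup hbddw ⟨t, rfl⟩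
  have hM'0 : 0 ≤ M' := le_trans (abs_nonneg _) (hub 0)
  have hupper : ∀ t, w t ^ 2 ≤ 1 + ε * (1 + b) * M' := by
    intro t
    have h1 := abs_le.mp (hub (t + 1))
    have h2 := abs_le.mp (hub (t - 1))
    have e1 : w (t + 1) + b * w (t - 1) ≤ (1 + b) * M' := by
      have := mul_le_mul_of_nonneg_left h2.2 hb0
      linarith [h1.2]
    have e2 := mul_le_mul_of_nonneg_left e1 hε0
    rw [hwsq t]
    calc 1 + ε * (w (t + 1) + b * w (t - 1)) ≤ 1 + ε * ((1 + b) * M') := by linarith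
    _ = 1 + ε * (1 + b) * M' := by ring
  have hXpos : (0:ℝ) ≤ 1 + ε * (1 + b) * M' :=
    le_trans (sq_nonneg (w 0)) (hupper 0)
  have hM'sq : M' ^ 2 ≤ 1 + ε * (1 + b) * M' := by
    have h1 : M' ≤ Real.sqrt (1 + ε * (1 + b) * M') := by
      apply csSup_le (Set.range_nonempty _)
      rintro x ⟨t, rfl⟩
      show |w t| ≤ _
      rw [show |w t| = Real.sqrt (w t ^ 2) from (Real.sqrt_sq_eq_abs _).symm]
      exact Real.sqrt_le_sqrt (hupper t)
    nlinarith [Real.sq_sqrt hXpos, Real.sqrt_nonneg (1 + ε * (1 + b) * M'), h1, hM'0]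
  have hM'M : M' ≤ M := by
    by_contra hcon
    push_neg at hcon
    have h1 : M' ^ 2 - M ^ 2 ≤ ε * (1 + b) * (M' - M) := by nlinarith [hM'sq, hMq]
    have h2 : (M' + M) * (M' - M) ≤ (ε * (1 + b)) * (M' - M) := by nlinarith [h1]
    have h3 : M' + M ≤ ε * (1 + b) := (mul_le_mul_iff_of_pos_right (sub_pos.mpr hcon)).mp h2
    linarith
  -- lower bound
  have hbddbw : BddBelow (Set.range fun t => |w t|) :=
    ⟨0, by rintro x ⟨t, rfl⟩; exact abs_nonneg _⟩
  set m' := sInf (Set.range fun t => |w t|) with hm'def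
  have hlb : ∀ t, m' ≤ |w t| := fun t => csInf_le hbddbw ⟨t, rfl⟩
  have hm'0 : 0 ≤ m' := le_csInf (Set.range_nonempty _) (by rintro x ⟨t, rfl⟩; exact abs_nonneg _)
  have hwabs : ∀ t, |w t| = s t * w t := by
    intro t
    have h1 : |s t * w t| = |w t| := by rw [abs_mul, henon_sabs hs, one_mul]
    rw [← h1, abs_of_pos (hwsgn t)]
  have hlower : ∀ t, 1 + ε * (b * m' - M) ≤ w t ^ 2 := by
    intro t
    have hub1 := abs_le.mp ((hub (t - 1)).trans hM'M)
    have hub2 := abs_le.mp ((hub (t + 1)).trans hM'M)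
    rw [hwsq t]
    rcases hF t with h | h
    · -- s (t - 1) = 1
      have e1 : m' ≤ w (t - 1) := by
        have := hlb (t - 1)
        rw [hwabs (t - 1), h, one_mul] at this
        exact this
      have p1 := mul_le_mul_of_nonneg_left e1 (mul_nonneg hε0 hb0)
      have p2 := mul_le_mul_of_nonneg_left hub2.1 hε0
      have p3 : 0 ≤ ε * ((1 - b) * (m' + M)) :=
        mul_nonneg hε0 (mul_nonneg (by linarith) (by linarith))
      nlinarith [p1, p2, p3]
    · -- s (t + 1) = 1
      have e1 : m' ≤ w (t + 1) := by
        have := hlb (t + 1)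
        rw [hwabs (t + 1), h, one_mul] at this
        exact this
      have p1 := mul_le_mul_of_nonneg_left e1 hε0
      have p2 := mul_le_mul_of_nonneg_left hub1.1 (mul_nonneg hε0 hb0)
      have p3 : 0 ≤ ε * ((1 - b) * (m' + M)) :=
        mul_nonneg hε0 (mul_nonneg (by linarith) (by linarith))
      nlinarith [p1, p2, p3]
  have hm'sq : 1 + ε * (b * m' - M) ≤ m' ^ 2 := by
    by_cases hc : 1 + ε * (b * m' - M) ≤ 0
    · nlinarith [sq_nonneg m']
    · push_neg at hc
      have h1 : Real.sqrt (1 + ε * (b * m' - M)) ≤ m' := by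
        apply le_csInf (Set.range_nonempty _)
        rintro x ⟨t, rfl⟩
        show _ ≤ |w t|
        rw [show |w t| = Real.sqrt (w t ^ 2) from (Real.sqrt_sq_eq_abs _).symm]
        exact Real.sqrt_le_sqrt (hlower t)
      nlinarith [Real.sq_sqrt hc.le, Real.sqrt_nonneg (1 + ε * (b * m' - M)), h1, hm'0]
  have hmm' : m ≤ m' := by
    by_contra hcon
    push_neg at hcon
    have h1 : ε * b * (m' - m) ≤ m' ^ 2 - m ^ 2 := by nlinarith [hm'sq, hmq]
    have h2 : (m + m') * (m - m') ≤ (ε * b) * (m - m') := by nlinarith [h1]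
    have h3 : m + m' ≤ ε * b := (mul_le_mul_iff_of_pos_right (sub_pos.mpr hcon)).mp h2
    have h4 : ε * b * 2 ≤ ε * (1 + b) := by nlinarith [mul_nonneg hε0 (by linarith : (0:ℝ) ≤ 1 - b)]
    linarith
  have hwband : henonBand m M s w := by
    intro t
    rw [← hwabs t]
    exact ⟨le_trans hmm' (hlb t), le_trans (hub t) hM'M⟩
  have hwfix : ∀ t, w t = henonF b ε s w t := by
    intro t
    have harg0 : 0 ≤ 1 + ε * (w (t + 1) + b * w (t - 1)) := by
      rw [← hwsq t]; exact sq_nonneg _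
    have h1 : Real.sqrt (1 + ε * (w (t + 1) + b * w (t - 1))) = |w t| := by
      rw [← hwsq t, Real.sqrt_sq_eq_abs]
    unfold henonF
    rw [h1, hwabs t, ← mul_assoc, henon_ssq hs, one_mul]
  exact huniq w z hwband hzband hwfix hzfix


/-- **Existence and uniqueness of Hénon orbits for the subshift `Σ_F`.**
For `0 ≤ b < 1` and `0 ≤ ε < ε_max`, every symbol sequence `s : ℤ → {−1,+1}`
avoiding the pattern `s_{t−1} = s_{t+1} = −1` continues to a unique bounded
orbit of the Hénon recurrence. -/
theorem henon_subshift_exists_unique (b ε : ℝ)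
    (hb0 : 0 ≤ b) (hb1 : b < 1) (hε0 : 0 ≤ ε)
    (hε : ε < (2 / (1 + b)) *
      Real.sqrt ((-b ^ 2 + 2 * b + 5 - 2 * Real.sqrt (5 + 4 * b)) / ((1 - b) * (5 - b))))
    (s : ℤ → ℝ) (hs : ∀ t : ℤ, s t = -1 ∨ s t = 1)
    (hF : ¬ ∃ t : ℤ, s (t - 1) = -1 ∧ s (t + 1) = -1) :
    ∃! z : ℤ → ℝ,
      (∃ M : ℝ, ∀ t : ℤ, |z t| ≤ M) ∧
      (∀ t : ℤ, s t * z t > 0) ∧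
      (∀ t : ℤ, ε * (z (t + 1) + b * z (t - 1)) + 1 - (z t) ^ 2 = 0) := by
  obtain ⟨m, M, hm0, hm1, hM1, hMq, hmq, hk⟩ := henon_params b ε hb0 hb1 hε0 hε
  have hF' : ∀ t : ℤ, s (t - 1) = 1 ∨ s (t + 1) = 1 := by
    intro t
    rcases hs (t - 1) with h1 | h1
    · rcases hs (t + 1) with h2 | h2
      · exact (hF ⟨t, h1, h2⟩).elim
      · exact Or.inr h2
    · exact Or.inl h1
  exact henon_key_s2 b ε m M hb0 hb1 hε0 hm0 hm1 hM1 hMq hmq hk s hs hF'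
end

section
/- Let x and y be distinct elements of H with cores c and c′ respectively. Then x and y are adjacent in the unimodal order if and only if there exists a finite binary string s such that {c, c′} = {s·(+), s·(−)} (the two strings obtained from s by appending a final + or a final −). -/
/-- Symbols: `true` stands for `+`, `false` stands for `−`.
The unimodal order on one-sided sequences: `a <_u b` iff they differ, and at the
first index `n` where they differ, `a n = −` exactly when the number of `−`
symbols among `a 0, …, a (n−1)` is even. -/
def UnimodalLt (a b : ℕ → Bool) : Prop :=
  ∃ n : ℕ, (∀ m : ℕ, m < n → a m = b m) ∧ a n ≠ b n ∧
    (a n = false ↔ Even (((Finset.range n).filter (fun m => a m = false)).card))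

/-- The homoclinic sequence with core `c`: the finite string `c`, followed by a
single `−`, followed by the constant sequence of `+`'s. -/
def homSeq (c : List Bool) : ℕ → Bool := fun n => (c ++ [false]).getD n true

/-- `H` is the set of all homoclinic sequences. -/
def homSet : Set (ℕ → Bool) := Set.range homSeq

/-- Two sequences are adjacent (neighbors) if they are distinct and no element
of `H` lies strictly between them in the unimodal order. -/
def HomAdjacent (x y : ℕ → Bool) : Prop :=
  x ≠ y ∧ ¬ ∃ z ∈ homSet,
    (UnimodalLt x z ∧ UnimodalLt z y) ∨ (UnimodalLt y z ∧ UnimodalLt z x)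

def cnt (a : ℕ → Bool) (n : ℕ) : ℕ :=
  ((Finset.range n).filter (fun m => a m = false)).card

lemma cnt_congr {a b : ℕ → Bool} {n : ℕ} (h : ∀ m, m < n → a m = b m) : cnt a n = cnt b n := by
  unfold cnt
  congr 1
  apply Finset.filter_congr
  intro m hm
  rw [h m (Finset.mem_range.mp hm)]

lemma cnt_succ (a : ℕ → Bool) (n : ℕ) :
    cnt a (n+1) = cnt a n + (if a n = false then 1 else 0) := by
  unfold cnt
  rw [Finset.range_add_one, Finset.filter_insert]
  split
  · rw [Finset.card_insert_of_notMem (by simp)]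
  · simp

lemma homSeq_lt {c : List Bool} {n : ℕ} (h : n < c.length) : homSeq c n = c.getD n true := by
  unfold homSeq
  exact List.getD_append _ _ _ _ h

lemma homSeq_len (c : List Bool) : homSeq c c.length = false := by
  unfold homSeq
  rw [List.getD_append_right _ _ _ _ (le_refl _)]
  simp

lemma homSeq_gt {c : List Bool} {n : ℕ} (h : c.length < n) : homSeq c n = true := by
  unfold homSeq
  apply List.getD_eq_default
  simp; omega

lemma homSeq_prefix {l r : List Bool} {k : ℕ} (hk : k < l.length) :
    homSeq (l ++ r) k = homSeq l k := by
  rw [homSeq_lt (by simp; omega), homSeq_lt hk, List.getD_append _ _ _ _ hk]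

lemma homSeq_at_append (l : List Bool) (a : Bool) (r : List Bool) :
    homSeq (l ++ a :: r) l.length = a := by
  rw [homSeq_lt (by simp)]
  rw [List.getD_append_right _ _ _ _ (le_refl _)]
  simp

lemma homSeq_inj : Function.Injective homSeq := by
  have key : ∀ c c' : List Bool, c.length ≤ c'.length → homSeq c = homSeq c' → c.length = c'.length := by
    intro c c' hle h
    by_contra hne
    have hl : c.length < c'.length := lt_of_le_of_ne hle hne
    have h1 := congrFun h c'.length
    rw [homSeq_gt hl, homSeq_len] at h1
    exact absurd h1 (by simp)
  intro c c' h
  have hlen : c.length = c'.length := by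
    rcases Nat.le_total c.length c'.length with hle | hle
    · exact key c c' hle h
    · exact (key c' c hle h.symm).symm
  apply List.ext_get hlen
  intro n h1 h2
  have h3 := congrFun h n
  rw [homSeq_lt h1, homSeq_lt (hlen ▸ h1)] at h3
  rw [List.getD_eq_getElem _ _ h1, List.getD_eq_getElem _ _ h2] at h3
  simpa using h3

lemma unimodal_iff {a b : ℕ → Bool} {n : ℕ} (h1 : ∀ m, m < n → a m = b m) (h2 : a n ≠ b n) :
    UnimodalLt a b ↔ (a n = false ↔ Even (cnt a n)) := by
  constructor
  · rintro ⟨k, hk1, hk2, hk3⟩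
    have hkn : k = n := by
      rcases lt_trichotomy k n with h | h | h
      · exact absurd (h1 k h) hk2
      · exact h
      · exact absurd (hk1 n h) h2
    subst hkn
    exact hk3
  · intro h
    exact ⟨n, h1, h2, h⟩

lemma unimodal_flip {a b : ℕ → Bool} {n : ℕ} (h1 : ∀ m, m < n → a m = b m) (h2 : a n ≠ b n) :
    UnimodalLt b a ↔ ¬ UnimodalLt a b := by
  rw [unimodal_iff h1 h2,
      unimodal_iff (fun m hm => (h1 m hm).symm) (Ne.symm h2),
      cnt_congr (fun m hm => (h1 m hm).symm)]
  cases hA : a n <;> cases hB : b n <;> simp_all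

lemma exists_firstDiff {a b : ℕ → Bool} (h : a ≠ b) :
    ∃ n, (∀ m, m < n → a m = b m) ∧ a n ≠ b n := by
  have hex : ∃ n, a n ≠ b n := by
    by_contra hc
    push_neg at hc
    exact h (funext hc)
  classical
  refine ⟨Nat.find hex, fun m hm => ?_, Nat.find_spec hex⟩
  have := Nat.find_min hex hm
  simpa using this

lemma unimodal_asymm {a b : ℕ → Bool} (h : a ≠ b) : UnimodalLt b a ↔ ¬ UnimodalLt a b := by
  obtain ⟨n, h1, h2⟩ := exists_firstDiff h
  exact unimodal_flip h1 h2

lemma cnt_homSeq_le {c : List Bool} {n : ℕ} (h : n ≤ c.length) :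
    cnt (homSeq c) n = (c.take n).count false := by
  induction n with
  | zero => simp [cnt]
  | succ k ih =>
    have hk : k < c.length := h
    rw [cnt_succ, ih (le_of_lt hk), List.take_succ, List.count_append, homSeq_lt hk,
        List.getD_eq_getElem _ _ hk, List.getElem?_eq_getElem hk]
    split <;> simp_all

lemma cnt_homSeq_gt {c : List Bool} {n : ℕ} (h : c.length < n) :
    cnt (homSeq c) n = c.count false + 1 := by
  induction n with
  | zero => omega
  | succ k ih =>
    rcases Nat.lt_or_ge c.length k with hk | hk
    · rw [cnt_succ, ih hk, homSeq_gt hk]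
      simp
    · have hkl : k = c.length := by omega
      subst hkl
      rw [cnt_succ, homSeq_len, cnt_homSeq_le (le_refl _), List.take_length]
      simp

lemma homSeq_ne {c c' : List Bool} (h : c ≠ c') : homSeq c ≠ homSeq c' :=
  fun hh => h (homSeq_inj hh)

lemma cmp_prefix {d c' : List Bool} (hne : d ≠ c')
    (hagree : ∀ m, m < d.length → homSeq d m = homSeq c' m) :
    UnimodalLt (homSeq d) (homSeq c') ↔ Even (d.count false) := by
  by_cases h : homSeq c' d.length = true
  · have hd : homSeq d d.length = false := homSeq_len d
    rw [unimodal_iff hagree (by rw [hd, h]; simp)]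
    rw [cnt_homSeq_le (le_refl _), List.take_length, hd]
    simp
  · have h' : homSeq c' d.length = false := by
      simpa using h
    have hagree' : ∀ m, m ≤ d.length → homSeq d m = homSeq c' m := by
      intro m hm
      rcases lt_or_eq_of_le hm with hm' | hm'
      · exact hagree m hm'
      · rw [hm', homSeq_len, h']
    obtain ⟨n, h1, h2⟩ := exists_firstDiff (homSeq_ne hne)
    have hn : d.length < n := by
      rcases Nat.lt_or_ge d.length n with hh | hh
      · exact hh
      · exact absurd (hagree' n hh) h2
    have hdn : homSeq d n = true := homSeq_gt hn
    rw [unimodal_iff h1 h2, cnt_homSeq_gt hn, hdn]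
    simp [Nat.even_add_one]

lemma homSeq_pad {c : List Bool} (m : ℕ) {k : ℕ} (hk : k ≤ c.length + m) :
    homSeq (c ++ false :: List.replicate m true) k = homSeq c k := by
  have hrep : ∀ j, (List.replicate m true).getD j true = true := by
    intro j
    rcases Nat.lt_or_ge j m with hj | hj
    · rw [List.getD_eq_getElem _ _ (by simpa using hj)]
      simp
    · exact List.getD_eq_default _ _ (by simpa using hj)
  rcases lt_trichotomy k c.length with h | h | h
  · exact homSeq_prefix h
  · subst h
    rw [homSeq_at_append, homSeq_len]
  · rw [homSeq_gt h, homSeq_lt (by simp; omega)]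
    rw [List.getD_append_right _ _ _ _ (by omega)]
    have h1 : 1 ≤ k - c.length := by omega
    rw [show k - c.length = (k - c.length - 1) + 1 by omega]
    exact hrep _

lemma homAdjacent_symm {x y : ℕ → Bool} (h : HomAdjacent x y) : HomAdjacent y x := by
  refine ⟨h.1.symm, ?_⟩
  rintro ⟨z, hz, hor⟩
  exact h.2 ⟨z, hz, hor.symm⟩

lemma list_trichotomy (c c' : List Bool) :
    c <+: c' ∨ c' <+: c ∨ ∃ s a u v, c = s ++ a :: u ∧ c' = s ++ (!a) :: v := by
  induction c generalizing c' with
  | nil => exact Or.inl (List.nil_prefix)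
  | cons h t ih =>
    cases c' with
    | nil => exact Or.inr (Or.inl (List.nil_prefix))
    | cons h' t' =>
      by_cases hh : h = h'
      · subst hh
        rcases ih t' with h1 | h1 | ⟨s, a, u, v, hu, hv⟩
        · exact Or.inl (List.cons_prefix_cons.mpr ⟨rfl, h1⟩)
        · exact Or.inr (Or.inl (List.cons_prefix_cons.mpr ⟨rfl, h1⟩))
        · exact Or.inr (Or.inr ⟨h :: s, a, u, v, by simp [hu], by simp [hv]⟩)
      · refine Or.inr (Or.inr ⟨[], h, t, t', by simp, ?_⟩)
        have : h' = !h := by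
          cases h <;> cases h' <;> simp_all
        simp [this]

lemma unimodal_ne {a b : ℕ → Bool} (h : UnimodalLt a b) : a ≠ b := by
  obtain ⟨n, _, h2, _⟩ := h
  intro hh
  exact h2 (by rw [hh])

lemma adjacent_pair (s : List Bool) :
    HomAdjacent (homSeq (s ++ [true])) (homSeq (s ++ [false])) := by
  set n := s.length with hn
  set F := s.count false with hF
  constructor
  · exact homSeq_ne (by simp)
  · rintro ⟨z, ⟨d, rfl⟩, hbet⟩
    set x := homSeq (s ++ [true]) with hx
    set y := homSeq (s ++ [false]) with hy
    set zz := homSeq d with hzz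
    have hxn : x n = true := homSeq_at_append s true []
    have hyn : y n = false := homSeq_at_append s false []
    have hxy_lt : ∀ m, m < n → x m = y m := fun m hm =>
      (homSeq_prefix hm).trans (homSeq_prefix hm).symm
    have hzx_ne : zz ≠ x := by
      rcases hbet with ⟨h1, _⟩ | ⟨_, h2⟩
      · exact (unimodal_ne h1).symm
      · exact unimodal_ne h2
    have hzy_ne : zz ≠ y := by
      rcases hbet with ⟨_, h2⟩ | ⟨h1, _⟩
      · exact unimodal_ne h2
      · exact (unimodal_ne h1).symm
    -- agreement of zz with x (hence y) below n
    have hagree : ∀ m, m < n → zz m = x m := by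
      by_contra hc
      push_neg at hc
      obtain ⟨m0, hm0, hm0'⟩ := hc
      have hex : ∃ k, zz k ≠ x k := ⟨m0, hm0'⟩
      have hk_spec : zz (Nat.find hex) ≠ x (Nat.find hex) := Nat.find_spec hex
      set k := Nat.find hex with hk
      have hk_lt : k < n := lt_of_le_of_lt (Nat.find_le hm0') hm0
      have hk_min : ∀ j, j < k → zz j = x j := fun j hj => by
        have := Nat.find_min hex hj
        simpa using this
      have hk_min' : ∀ j, j < k → zz j = y j := fun j hj =>
        (hk_min j hj).trans (hxy_lt j (hj.trans hk_lt))
      have hxk_eq : x k = y k := hxy_lt k hk_lt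
      have hk_spec' : zz k ≠ y k := by rw [← hxk_eq]; exact hk_spec
      have e1 : UnimodalLt zz x ↔ UnimodalLt zz y := by
        rw [unimodal_iff hk_min hk_spec, unimodal_iff hk_min' hk_spec']
      have e2 : UnimodalLt x zz ↔ UnimodalLt y zz := by
        rw [unimodal_iff (fun j hj => (hk_min j hj).symm) (Ne.symm hk_spec),
            unimodal_iff (fun j hj => (hk_min' j hj).symm) (Ne.symm hk_spec'),
            hxk_eq, cnt_congr (fun j hj => hxy_lt j (hj.trans hk_lt))]
      rcases hbet with ⟨h1, h2⟩ | ⟨h1, h2⟩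
      · exact (unimodal_asymm hzy_ne).mp (e2.mp h1) h2
      · exact (unimodal_asymm hzx_ne).mp (e2.mpr h1) h2
    have hagree_y : ∀ m, m < n → zz m = y m := fun m hm =>
      (hagree m hm).trans (hxy_lt m hm)
    have hcnt_x : cnt x n = F := by
      rw [hx, cnt_homSeq_le (by simp [hn]), hn, List.take_left, hF]
    have hcnt_y : cnt y n = F := by
      rw [hy, cnt_homSeq_le (by simp [hn]), hn, List.take_left, hF]
    rcases Bool.eq_false_or_eq_true (zz n) with hzn | hzn
    · -- zz n = true : compare y/zz at n, and x/zz via cmp_prefix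
      have hzy_diff : y n ≠ zz n := by rw [hyn, hzn]; simp
      have e1 : UnimodalLt y zz ↔ Even F := by
        rw [unimodal_iff (fun m hm => (hagree_y m hm).symm) hzy_diff, hcnt_y, hyn]
        simp
      have hdne : s ++ [true] ≠ d := fun h => hzx_ne (by rw [hzz, hx, h])
      have hagree2 : ∀ m, m < (s ++ [true]).length → homSeq (s ++ [true]) m = homSeq d m := by
        intro m hm
        simp at hm
        rcases Nat.lt_or_ge m n with hm' | hm'
        · exact (hagree m hm').symm
        · have hmn : m = n := by omega
          subst hmn
          rw [← hx, ← hzz, hxn, hzn]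
      have e2 : UnimodalLt x zz ↔ Even F := by
        have := cmp_prefix hdne hagree2
        rw [← hx, ← hzz] at this
        rw [this]
        simp [hF, List.count_append]
      rcases hbet with ⟨h1, h2⟩ | ⟨h1, h2⟩
      · exact (unimodal_asymm hzy_ne).mp (e1.mpr (e2.mp h1)) h2
      · exact (unimodal_asymm hzx_ne).mp (e2.mpr (e1.mp h1)) h2
    · -- zz n = false : compare x/zz at n, and y/zz via cmp_prefix
      have hzx_diff : x n ≠ zz n := by rw [hxn, hzn]; simp
      have e1 : UnimodalLt x zz ↔ ¬ Even F := by
        rw [unimodal_iff (fun m hm => (hagree m hm).symm) hzx_diff, hcnt_x, hxn]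
        simp
      have hdne : s ++ [false] ≠ d := fun h => hzy_ne (by rw [hzz, hy, h])
      have hagree2 : ∀ m, m < (s ++ [false]).length → homSeq (s ++ [false]) m = homSeq d m := by
        intro m hm
        simp at hm
        rcases Nat.lt_or_ge m n with hm' | hm'
        · exact (hagree_y m hm').symm
        · have hmn : m = n := by omega
          subst hmn
          rw [← hy, ← hzz, hyn, hzn]
      have e2 : UnimodalLt y zz ↔ Even (F + 1) := by
        have := cmp_prefix hdne hagree2
        rw [← hy, ← hzz] at this
        rw [this]
        simp [hF, List.count_append]
      rcases hbet with ⟨h1, h2⟩ | ⟨h1, h2⟩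
      · exact (unimodal_asymm hzy_ne).mp
          (e2.mpr (by rw [Nat.even_add_one]; exact e1.mp h1)) h2
      · have hEF : Even F := by
          have := (unimodal_asymm hzx_ne).mpr
          by_contra hnF
          exact (unimodal_asymm hzx_ne).mp (e1.mpr hnF) h2
        have := e2.mp h1
        rw [Nat.even_add_one] at this
        exact this hEF

lemma not_adjacent_prefix (c d : List Bool) (hd : d ≠ []) :
    ¬ HomAdjacent (homSeq c) (homSeq (c ++ d)) := by
  rintro ⟨hne, hno⟩
  apply hno
  obtain ⟨b, w, rfl⟩ := List.exists_cons_of_ne_nil hd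
  set x := homSeq c with hx
  set y := homSeq (c ++ b :: w) with hy
  set L := c.length with hL
  set F := c.count false with hF
  rcases Bool.eq_false_or_eq_true b with rfl | rfl
  · -- b = true : z = homSeq (c ++ [false])
    refine ⟨homSeq (c ++ [false]), ⟨_, rfl⟩, ?_⟩
    set zz := homSeq (c ++ [false]) with hzz
    have hprefix : ∀ m, m < L → x m = zz m :=
      fun m hm => (homSeq_prefix hm).symm
    have e1 : UnimodalLt x zz ↔ Even F := by
      have := cmp_prefix (d := c) (c' := c ++ [false]) (by simp) hprefix
      rw [← hx, ← hzz] at this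
      exact this
    have hzx_ne : zz ≠ x := homSeq_ne (by simp)
    have e1' : UnimodalLt zz x ↔ ¬ Even F := by
      rw [unimodal_asymm hzx_ne.symm, e1]
    -- zz vs y at L
    have hzL : zz L = false := homSeq_at_append c false []
    have hyL : y L = true := homSeq_at_append c true w
    have hagree : ∀ m, m < L → zz m = y m := fun m hm =>
      ((homSeq_prefix hm).trans (homSeq_prefix hm).symm)
    have hzy_diff : zz L ≠ y L := by rw [hzL, hyL]; simp
    have hcnt : cnt zz L = F := by
      rw [cnt_congr (fun m hm => (hprefix m hm).symm), hx, cnt_homSeq_le (le_refl _),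
          List.take_length, hF]
    have e2 : UnimodalLt zz y ↔ Even F := by
      rw [unimodal_iff hagree hzy_diff, hcnt, hzL]
      simp
    have hzy_ne : zz ≠ y := fun h => hzy_diff (by rw [h])
    have e2' : UnimodalLt y zz ↔ ¬ Even F := by
      rw [unimodal_asymm hzy_ne, e2]
    rcases Nat.even_or_odd F with hEF | hOF
    · exact Or.inl ⟨e1.mpr hEF, e2.mpr hEF⟩
    · rw [← Nat.not_even_iff_odd] at hOF
      exact Or.inr ⟨e2'.mpr hOF, e1'.mpr hOF⟩
  · -- b = false : use first difference m and z = homSeq (c ++ false :: replicate m true)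
    have hxy : x ≠ y := homSeq_ne (by simp)
    obtain ⟨m, hm1, hm2⟩ := exists_firstDiff hxy
    have hmL : L < m := by
      rcases Nat.lt_or_ge L m with h | h
      · exact h
      · exfalso
        apply hm2
        rcases lt_or_eq_of_le h with h' | h'
        · exact (homSeq_prefix h').symm
        · rw [h', hx, hy, homSeq_len, hL, homSeq_at_append]
    have hxm : x m = true := homSeq_gt hmL
    have hym : y m = false := by
      rcases Bool.eq_false_or_eq_true (y m) with h | h
      · exact absurd (hxm.trans h.symm) hm2
      · exact h
    refine ⟨homSeq (c ++ false :: List.replicate m true), ⟨_, rfl⟩, ?_⟩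
    set zz := homSeq (c ++ false :: List.replicate m true) with hzz
    have hz_eq_x : ∀ k, k ≤ L + m → zz k = x k := fun k hk => homSeq_pad m hk
    have e1 : UnimodalLt x zz ↔ Even F := by
      have := cmp_prefix (d := c) (c' := c ++ false :: List.replicate m true)
        (by simp) (fun k hk => (hz_eq_x k (by omega)).symm)
      rw [← hx, ← hzz] at this
      exact this
    have hzx_ne : zz ≠ x := homSeq_ne (by simp)
    have e1' : UnimodalLt zz x ↔ ¬ Even F := by
      rw [unimodal_asymm hzx_ne.symm, e1]
    have hzm : zz m = true := by
      rw [hz_eq_x m (by omega), hxm]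
    have hzy_agree : ∀ k, k < m → zz k = y k := fun k hk =>
      (hz_eq_x k (by omega)).trans (hm1 k hk)
    have hzy_diff : zz m ≠ y m := by rw [hzm, hym]; simp
    have hcnt : cnt zz m = F + 1 := by
      rw [cnt_congr (fun k hk => hz_eq_x k (by omega)), hx, cnt_homSeq_gt hmL, hF]
    have e2 : UnimodalLt zz y ↔ Even F := by
      rw [unimodal_iff hzy_agree hzy_diff, hcnt, hzm]
      simp [Nat.even_add_one]
    have hzy_ne : zz ≠ y := fun h => hzy_diff (by rw [h])
    have e2' : UnimodalLt y zz ↔ ¬ Even F := by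
      rw [unimodal_asymm hzy_ne, e2]
    rcases Nat.even_or_odd F with hEF | hOF
    · exact Or.inl ⟨e1.mpr hEF, e2.mpr hEF⟩
    · rw [← Nat.not_even_iff_odd] at hOF
      exact Or.inr ⟨e2'.mpr hOF, e1'.mpr hOF⟩

lemma not_adjacent_split (s : List Bool) (a : Bool) (u v : List Bool) (hu : u ≠ []) :
    ¬ HomAdjacent (homSeq (s ++ a :: u)) (homSeq (s ++ (!a) :: v)) := by
  rintro ⟨hne, hno⟩
  apply hno
  refine ⟨homSeq (s ++ [a]), ⟨_, rfl⟩, ?_⟩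
  set n := s.length with hn
  set F := s.count false with hF
  set x := homSeq (s ++ a :: u) with hx
  set y := homSeq (s ++ (!a) :: v) with hy
  set zz := homSeq (s ++ [a]) with hzz
  have hne1 : s ++ [a] ≠ s ++ a :: u := by
    intro h
    have := List.append_cancel_left h
    simp at this
    exact hu this

  have hagree1 : ∀ m, m < (s ++ [a]).length → homSeq (s ++ [a]) m = homSeq (s ++ a :: u) m := by
    intro m hm
    simp at hm
    rcases Nat.lt_or_ge m n with hm' | hm'
    · exact (homSeq_prefix hm').trans (homSeq_prefix hm').symm
    · have hmn : m = n := by omega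
      subst hmn
      rw [show s ++ [a] = s ++ a :: ([] : List Bool) from rfl, homSeq_at_append, hn,
          homSeq_at_append]
  have e1 : UnimodalLt zz x ↔ Even ((s ++ [a]).count false) := cmp_prefix hne1 hagree1
  have hzx_ne : zz ≠ x := homSeq_ne hne1
  have e1' : UnimodalLt x zz ↔ ¬ Even ((s ++ [a]).count false) := by
    rw [unimodal_asymm hzx_ne, e1]
  -- zz vs y at n
  have hzn : zz n = a := by
    rw [hzz, show s ++ [a] = s ++ a :: ([] : List Bool) from rfl, hn, homSeq_at_append]
  have hyn : y n = !a := by rw [hy, hn, homSeq_at_append]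
  have hagree2 : ∀ m, m < n → zz m = y m := fun m hm =>
    (homSeq_prefix hm).trans (homSeq_prefix hm).symm
  have hzy_diff : zz n ≠ y n := by
    rw [hzn, hyn]
    cases a <;> simp
  have hcnt : cnt zz n = F := by
    rw [cnt_congr (fun m hm => (homSeq_prefix hm : homSeq (s ++ [a]) m = homSeq s m)),
        cnt_homSeq_le (le_refl _), List.take_length, hF]
  have e2 : UnimodalLt zz y ↔ ((a = false) ↔ Even F) := by
    rw [unimodal_iff hagree2 hzy_diff, hcnt, hzn]
  have hzy_ne : zz ≠ y := fun h => hzy_diff (by rw [h])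
  have e2' : UnimodalLt y zz ↔ ¬ ((a = false) ↔ Even F) := by
    rw [unimodal_asymm hzy_ne, e2]
  have hcount : (s ++ [a]).count false = F + (if a = false then 1 else 0) := by
    rw [List.count_append, hF]
    cases a <;> simp
  rcases Bool.eq_false_or_eq_true a with rfl | rfl
  · -- a = true : G = F
    rw [hcount] at e1 e1'
    simp only [if_neg (by simp : ¬(true = false)), Nat.add_zero] at e1 e1'
    have e2a : UnimodalLt zz y ↔ ¬ Even F := by
      rw [e2]; simp
    have e2a' : UnimodalLt y zz ↔ Even F := by
      rw [e2']; simp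
    rcases Nat.even_or_odd F with hEF | hOF
    · exact Or.inr ⟨e2a'.mpr hEF, e1.mpr hEF⟩
    · rw [Nat.not_even_iff_odd] at e1' e2a
      exact Or.inl ⟨e1'.mpr hOF, e2a.mpr hOF⟩
  · -- a = false : G = F + 1
    rw [hcount] at e1 e1'
    norm_num at e1 e1'
    have e2a : UnimodalLt zz y ↔ Even F := by
      rw [e2]; simp
    have e2a' : UnimodalLt y zz ↔ ¬ Even F := by
      rw [e2']; simp
    rcases Nat.even_or_odd F with hEF | hOF
    · exact Or.inl ⟨e1'.mpr (Even.add_one hEF), e2a.mpr hEF⟩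
    · have hOF' : ¬ Even F := Nat.not_even_iff_odd.mpr hOF
      exact Or.inr ⟨e2a'.mpr hOF', e1.mpr (Odd.add_one hOF)⟩


/-- **Neighboring homoclinic orbits in the complete horseshoe.**
Two distinct homoclinic sequences with cores `c` and `c'` are adjacent in the
unimodal order iff their cores are of the form `s·(+)` and `s·(−)` for some
finite string `s`. -/
theorem homoclinic_neighbors_iff (c c' : List Bool) (hcc' : c ≠ c') :
    HomAdjacent (homSeq c) (homSeq c') ↔
      ∃ s : List Bool,
        (c = s ++ [true] ∧ c' = s ++ [false]) ∨
        (c = s ++ [false] ∧ c' = s ++ [true]) := by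
  constructor
  · intro hadj
    rcases list_trichotomy c c' with h | h | ⟨s, a, u, v, hc, hc'⟩
    · obtain ⟨d, rfl⟩ := h
      have hd : d ≠ [] := by
        rintro rfl
        simp at hcc'
      exact absurd hadj (not_adjacent_prefix c d hd)
    · obtain ⟨d, rfl⟩ := h
      have hd : d ≠ [] := by
        rintro rfl
        simp at hcc'
      exact absurd (homAdjacent_symm hadj) (not_adjacent_prefix c' d hd)
    · subst hc
      subst hc'
      rcases eq_or_ne u [] with rfl | hu
      · rcases eq_or_ne v [] with rfl | hv
        · rcases Bool.eq_false_or_eq_true a with rfl | rfl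
          · exact ⟨s, Or.inl ⟨rfl, rfl⟩⟩
          · exact ⟨s, Or.inr ⟨rfl, rfl⟩⟩
        · exfalso
          have := not_adjacent_split s (!a) v [] hv
          rw [Bool.not_not] at this
          exact this (homAdjacent_symm hadj)
      · exact absurd hadj (not_adjacent_split s a u v hu)
  · rintro ⟨s, ⟨rfl, rfl⟩ | ⟨rfl, rfl⟩⟩
    · exact adjacent_pair s
    · exact homAdjacent_symm (adjacent_pair s)
end
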